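/- arXiv:1307.1501 — 5 statements merged into one kernel-verified Lean document; each statement's English description precedes it below -/
import Mathlib

section
/- If φ_n : E → ℝ is a uniformly bounded sequence of continuous functions on a complete locally compact separable metric space E converging uniformly on compact subsets of E to a function φ, and μ_n is a sequence of probability measures on E converging weakly to a probability measure μ, then φ is continuous and bounded on E and ∫ φ_n dμ_n → ∫ φ dμ. -/
open MeasureTheory Filter Topology

/-- Second continuous mapping theorem, part (i): if `φn` are uniformly bounded continuous
functions converging uniformly on compact sets to `φ`, and `μn` are probability measures
converging weakly to `μ`, then `φ` is continuous and bounded and `∫ φn dμn → ∫ φ dμ`. -/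
theorem stmt_0 {E : Type*} [MetricSpace E] [CompleteSpace E] [LocallyCompactSpace E]
    [TopologicalSpace.SeparableSpace E] [MeasurableSpace E] [BorelSpace E]
    (μn : ℕ → Measure E) (μ : Measure E)
    [∀ n, IsProbabilityMeasure (μn n)] [IsProbabilityMeasure μ]
    (hweak : ∀ f : E → ℝ, Continuous f → (∃ M : ℝ, ∀ x, |f x| ≤ M) →
      Tendsto (fun n => ∫ x, f x ∂ μn n) atTop (𝓝 (∫ x, f x ∂ μ)))
    (φn : ℕ → E → ℝ) (φ : E → ℝ)
    (hcont : ∀ n, Continuous (φn n))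
    (C : ℝ) (hbd : ∀ n x, |φn n x| ≤ C)
    (hconv : ∀ K : Set E, IsCompact K → TendstoUniformlyOn φn φ atTop K) :
    Continuous φ ∧ (∀ x, |φ x| ≤ C) ∧
      Tendsto (fun n => ∫ x, φn n x ∂ μn n) atTop (𝓝 (∫ x, φ x ∂ μ)) := by
  -- continuity of φ
  have hφcont : Continuous φ :=
    (tendstoLocallyUniformly_iff_forall_isCompact.mpr hconv).continuous
      (Eventually.of_forall hcont).frequently
  -- bound on φ
  have hφbd : ∀ x, |φ x| ≤ C := by
    intro x
    have h1 : Tendsto (fun n => φn n x) atTop (𝓝 (φ x)) :=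
      (hconv {x} isCompact_singleton).tendsto_at (Set.mem_singleton x)
    exact le_of_tendsto h1.abs (Eventually.of_forall fun n => hbd n x)
  refine ⟨hφcont, hφbd, ?_⟩
  -- E is nonempty, so C ≥ 0
  haveI : Nonempty E := by
    by_contra h
    have : μ Set.univ = 1 := measure_univ
    rw [not_nonempty_iff] at h
    simp [Set.univ_eq_empty_iff.mpr h] at this
  obtain ⟨x0⟩ := ‹Nonempty E›
  have hC0 : 0 ≤ C := le_trans (abs_nonneg _) (hbd 0 x0)
  -- integrability facts
  have hφnint : ∀ n (ν : Measure E) [IsProbabilityMeasure ν], Integrable (φn n) ν := by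
    intro n ν _
    exact (integrable_const C).mono' (hcont n).aestronglyMeasurable
      (Eventually.of_forall fun x => by simpa [Real.norm_eq_abs] using hbd n x)
  have hφint : ∀ (ν : Measure E) [IsProbabilityMeasure ν], Integrable φ ν := by
    intro ν _
    exact (integrable_const C).mono' hφcont.aestronglyMeasurable
      (Eventually.of_forall fun x => by simpa [Real.norm_eq_abs] using hφbd x)
  -- weak convergence applied to φ
  have hb : Tendsto (fun n => ∫ x, φ x ∂ μn n) atTop (𝓝 (∫ x, φ x ∂ μ)) :=
    hweak φ hφcont ⟨C, hφbd⟩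
  -- key: the difference tends to 0
  have hd : Tendsto (fun n => (∫ x, φn n x ∂ μn n) - ∫ x, φ x ∂ μn n) atTop (𝓝 0) := by
    rw [NormedAddCommGroup.tendsto_nhds_zero]
    intro ε hε
    set ε₁ : ℝ := ε / (4 * C + 2) with hε₁def
    have hε₁ : 0 < ε₁ := div_pos hε (by linarith)
    -- a compact set carrying most of μ
    obtain ⟨K, -, hK, hμK⟩ : ∃ K ⊆ Set.univ, IsCompact K ∧ 1 - ENNReal.ofReal ε₁ < μ K := by
      refine MeasurableSet.exists_lt_isCompact MeasurableSet.univ ?_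
      rw [measure_univ]
      exact ENNReal.sub_lt_self ENNReal.one_ne_top one_ne_zero
        (by simpa using hε₁)
    -- Urysohn function
    obtain ⟨g, hg1, -, hgsupp, hg01⟩ :=
      exists_continuous_one_zero_of_isCompact hK isClosed_empty (Set.disjoint_empty _)
    set L : Set E := tsupport g with hLdef
    have hL : IsCompact L := hgsupp
    have hLmeas : MeasurableSet L := hL.isClosed.measurableSet
    -- integrability of g
    have hgint : ∀ (ν : Measure E) [IsProbabilityMeasure ν], Integrable (⇑g) ν := by
      intro ν _
      exact g.continuous.integrable_of_hasCompactSupport hgsupp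
    -- ∫ g dμ ≥ (μ K).toReal
    have hgμ : (μ K).toReal ≤ ∫ x, g x ∂ μ := by
      have h1 : ∫ x in K, g x ∂ μ = (μ K).toReal := by
        rw [setIntegral_congr_fun hK.measurableSet (fun x hx => hg1 hx)]
        simp [Measure.real]
      calc (μ K).toReal = ∫ x in K, g x ∂ μ := h1.symm
        _ ≤ ∫ x, g x ∂ μ := setIntegral_le_integral (hgint μ)
            (Eventually.of_forall fun x => (hg01 x).1)
    have hμKr : 1 - ε₁ ≤ (μ K).toReal := by
      rcases le_or_gt (1 - ε₁) 0 with h | h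
      · exact h.trans ENNReal.toReal_nonneg
      · have : ENNReal.ofReal (1 - ε₁) ≤ μ K := by
          refine le_of_lt (lt_of_le_of_lt ?_ hμK)
          rw [ENNReal.ofReal_sub _ hε₁.le]
          simp
        calc 1 - ε₁ = (ENNReal.ofReal (1 - ε₁)).toReal := by
              rw [ENNReal.toReal_ofReal h.le]
          _ ≤ (μ K).toReal := ENNReal.toReal_mono (measure_ne_top μ K) this
    -- for any probability ν : ∫ g dν ≤ ν L
    have hgL : ∀ (ν : Measure E) [IsProbabilityMeasure ν], ∫ x, g x ∂ ν ≤ (ν L).toReal := by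
      intro ν _
      have hsplit : ∫ x, g x ∂ ν = (∫ x in L, g x ∂ ν) + ∫ x in Lᶜ, g x ∂ ν :=
        (integral_add_compl hLmeas (hgint ν)).symm
      have h0 : ∫ x in Lᶜ, g x ∂ ν = 0 := by
        rw [setIntegral_congr_fun hLmeas.compl
          (fun x hx => image_eq_zero_of_notMem_tsupport hx)]
        simp
      have h1 : ∫ x in L, g x ∂ ν ≤ 1 * (ν L).toReal := by
        calc ∫ x in L, g x ∂ ν ≤ ‖∫ x in L, g x ∂ ν‖ := le_abs_self _
          _ ≤ 1 * (ν L).toReal := by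
            refine norm_setIntegral_le_of_norm_le_const (measure_lt_top _ _)
              fun x _ => ?_
            rw [Real.norm_eq_abs, abs_of_nonneg (hg01 x).1]
            exact (hg01 x).2
      rw [hsplit, h0, add_zero]
      linarith
    -- eventually μn n L is large
    have hev1 : ∀ᶠ n in atTop, 1 - 2 * ε₁ < (μn n L).toReal := by
      have hlim := hweak (⇑g) g.continuous
        ⟨1, fun x => abs_le.mpr ⟨by linarith [(hg01 x).1], (hg01 x).2⟩⟩
      have hlt : 1 - 2 * ε₁ < ∫ x, g x ∂ μ := by
        have := hgμ; have := hμKr; linarith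
      filter_upwards [hlim.eventually (eventually_gt_nhds hlt)] with n hn
      exact lt_of_lt_of_le hn (hgL (μn n))
    -- eventually uniform closeness on L
    have hev2 : ∀ᶠ n in atTop, ∀ x ∈ L, |φn n x - φ x| ≤ ε₁ := by
      have := (Metric.tendstoUniformlyOn_iff.mp (hconv L hL)) ε₁ hε₁
      filter_upwards [this] with n hn x hx
      have := hn x hx
      rw [Real.dist_eq, abs_sub_comm] at this
      exact this.le
    filter_upwards [hev1, hev2] with n hn1 hn2
    -- the main estimate
    have hint : Integrable (fun x => φn n x - φ x) (μn n) :=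
      (hφnint n (μn n)).sub (hφint (μn n))
    have hdiff : (∫ x, φn n x ∂ μn n) - ∫ x, φ x ∂ μn n
        = ∫ x, (φn n x - φ x) ∂ μn n :=
      (integral_sub (hφnint n (μn n)) (hφint (μn n))).symm
    rw [Real.norm_eq_abs, hdiff]
    have hsplit : ∫ x, (φn n x - φ x) ∂ μn n
        = (∫ x in L, (φn n x - φ x) ∂ μn n) + ∫ x in Lᶜ, (φn n x - φ x) ∂ μn n :=
      (integral_add_compl hLmeas hint).symm
    have hLc : (μn n Lᶜ).toReal ≤ 2 * ε₁ := by
      have hcompl : μn n Lᶜ = 1 - μn n L := by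
        rw [measure_compl hLmeas (measure_ne_top _ _), measure_univ]
      have : (μn n Lᶜ).toReal = 1 - (μn n L).toReal := by
        rw [hcompl, ENNReal.toReal_sub_of_le prob_le_one ENNReal.one_ne_top]
        simp
      rw [this]; linarith
    have h1 : |∫ x in L, (φn n x - φ x) ∂ μn n| ≤ ε₁ := by
      calc |∫ x in L, (φn n x - φ x) ∂ μn n| ≤ ε₁ * (μn n L).toReal := by
            rw [← Real.norm_eq_abs]
            refine norm_setIntegral_le_of_norm_le_const (measure_lt_top _ _)
              fun x hx => ?_
            rw [Real.norm_eq_abs]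
            exact hn2 x hx
        _ ≤ ε₁ * 1 := by
            refine mul_le_mul_of_nonneg_left ?_ hε₁.le
            exact ENNReal.toReal_le_of_le_ofReal one_pos.le (by simpa using prob_le_one)
        _ = ε₁ := mul_one _
    have h2 : |∫ x in Lᶜ, (φn n x - φ x) ∂ μn n| ≤ 2 * C * (2 * ε₁) := by
      calc |∫ x in Lᶜ, (φn n x - φ x) ∂ μn n| ≤ (2 * C) * (μn n Lᶜ).toReal := by
            rw [← Real.norm_eq_abs]
            refine norm_setIntegral_le_of_norm_le_const (measure_lt_top _ _)
              fun x _ => ?_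
            rw [Real.norm_eq_abs]
            calc |φn n x - φ x| ≤ |φn n x| + |φ x| := abs_sub _ _
              _ ≤ 2 * C := by linarith [hbd n x, hφbd x]
        _ ≤ 2 * C * (2 * ε₁) := mul_le_mul_of_nonneg_left hLc (by linarith)
    calc |∫ x, (φn n x - φ x) ∂ μn n|
        ≤ |∫ x in L, (φn n x - φ x) ∂ μn n| + |∫ x in Lᶜ, (φn n x - φ x) ∂ μn n| := by
          rw [hsplit]; exact abs_add_le _ _
      _ ≤ ε₁ + 2 * C * (2 * ε₁) := add_le_add h1 h2
      _ = ε₁ * (4 * C + 1) := by ring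
      _ < ε₁ * (4 * C + 2) := by nlinarith
      _ = ε := by rw [hε₁def]; field_simp
  -- combine
  have := hd.add hb
  simpa using this
end

section
/- Let ν be a measure on (0,∞] × [−∞,∞]^h satisfying the homogeneity property ν((t y₀, ∞] × ∏_{i=1}^h [−∞, t^{κ_i} y_i]) = t^{−α} ν((y₀,∞] × ∏_{i=1}^h [−∞, y_i]) for all t > 0, all y₀ > 0 and y_i ∈ ℝ, where α > 0 and κ_i ∈ ℝ. Define G_h on ℝ^h by G_h(y₁,…,y_h) = ν restricted via the change of variables u_i ↦ u₀^{κ_i} u_i, integrated over u₀ ∈ [1,∞). Then for all y₀ ≥ 1, the measure of the set {(u₀,…,u_h) : u₀ > y₀, u_i ≤ u₀^{κ_i} y_i for all i} equals y₀^{−α} G_h(y₁,…,y_h). -/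
open MeasureTheory Filter Topology


lemma stmt4_measurable_rpow_const (q : ℝ) : Measurable (fun x : ℝ => x ^ q) := by
  have : (fun x : ℝ => x ^ q) = fun x =>
      if x = 0 then (if q = 0 then 1 else 0)
      else if 0 < x then Real.exp (Real.log x * q)
      else Real.exp (Real.log x * q) * Real.cos (q * Real.pi) := by
    funext x
    rcases lt_trichotomy x 0 with hx | rfl | hx
    · rw [Real.rpow_def_of_neg hx]; simp [hx.ne, not_lt.2 hx.le]
    · by_cases hq : q = 0
      · subst hq; simp
      · simp [Real.zero_rpow hq, hq]
    · rw [Real.rpow_def_of_pos hx]; simp [hx.ne', hx]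
  rw [this]
  refine Measurable.ite (measurableSet_eq_fun measurable_id measurable_const) measurable_const ?_
  refine Measurable.ite (measurableSet_lt measurable_const measurable_id) ?_ ?_
  · exact (Real.measurable_log.mul_const q).exp
  · exact ((Real.measurable_log.mul_const q).exp).mul_const _

lemma stmt4_rpow_mul_le_max {κ y a b s : ℝ} (ha : 0 < a) (has : a ≤ s) (hsb : s ≤ b) :
    s ^ κ * y ≤ max (a ^ κ * y) (b ^ κ * y) := by
  have hs : (0:ℝ) < s := lt_of_lt_of_le ha has
  rcases le_total 0 κ with hκ | hκ <;> rcases le_total 0 y with hy | hy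
  · exact le_max_of_le_right (mul_le_mul_of_nonneg_right (Real.rpow_le_rpow hs.le hsb hκ) hy)
  · exact le_max_of_le_left (mul_le_mul_of_nonpos_right (Real.rpow_le_rpow ha.le has hκ) hy)
  · exact le_max_of_le_left (mul_le_mul_of_nonneg_right (Real.rpow_le_rpow_of_nonpos ha has hκ) hy)
  · exact le_max_of_le_right (mul_le_mul_of_nonpos_right (Real.rpow_le_rpow_of_nonpos hs hsb hκ) hy)

lemma stmt4_measA {h : ℕ} (s : ℝ) (c : Fin h → ℝ) :
    MeasurableSet {p : ℝ × (Fin h → ℝ) | s < p.1 ∧ ∀ i, p.2 i ≤ c i} := by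
  have : {p : ℝ × (Fin h → ℝ) | s < p.1 ∧ ∀ i, p.2 i ≤ c i}
      = {p : ℝ × (Fin h → ℝ) | s < p.1} ∩ ⋂ i, {p | p.2 i ≤ c i} := by
    ext p; simp [Set.mem_iInter]
  rw [this]
  exact (measurableSet_lt measurable_const measurable_fst).inter
    (MeasurableSet.iInter fun i => measurableSet_le (measurable_snd.eval) measurable_const)

lemma stmt4_measB {h : ℕ} (a b : ℝ) (c : Fin h → ℝ) :
    MeasurableSet {p : ℝ × (Fin h → ℝ) | a < p.1 ∧ p.1 ≤ b ∧ ∀ i, p.2 i ≤ c i} := by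
  have : {p : ℝ × (Fin h → ℝ) | a < p.1 ∧ p.1 ≤ b ∧ ∀ i, p.2 i ≤ c i}
      = ({p : ℝ × (Fin h → ℝ) | a < p.1} ∩ {p | p.1 ≤ b}) ∩ ⋂ i, {p | p.2 i ≤ c i} := by
    ext p; simp [Set.mem_iInter]; tauto
  rw [this]
  exact ((measurableSet_lt measurable_const measurable_fst).inter
      (measurableSet_le measurable_fst measurable_const)).inter
    (MeasurableSet.iInter fun i => measurableSet_le (measurable_snd.eval) measurable_const)

lemma stmt4_measS {h : ℕ} (t : ℝ) (κ y : Fin h → ℝ) :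
    MeasurableSet {p : ℝ × (Fin h → ℝ) | t < p.1 ∧ ∀ i, p.2 i ≤ p.1 ^ κ i * y i} := by
  have : {p : ℝ × (Fin h → ℝ) | t < p.1 ∧ ∀ i, p.2 i ≤ p.1 ^ κ i * y i}
      = {p : ℝ × (Fin h → ℝ) | t < p.1} ∩ ⋂ i, {p | p.2 i ≤ p.1 ^ κ i * y i} := by
    ext p; simp [Set.mem_iInter]
  rw [this]
  refine (measurableSet_lt measurable_const measurable_fst).inter
    (MeasurableSet.iInter fun i => measurableSet_le (measurable_snd.eval) ?_)
  exact ((stmt4_measurable_rpow_const (κ i)).comp measurable_fst).mul_const _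

noncomputable def stmt4g (n k : ℕ) : ℝ := (2:ℝ) ^ ((k:ℝ) / 2 ^ n)

lemma stmt4g_one_le (n k : ℕ) : 1 ≤ stmt4g n k :=
  Real.one_le_rpow one_le_two (by positivity)

lemma stmt4g_pos (n k : ℕ) : 0 < stmt4g n k := lt_of_lt_of_le one_pos (stmt4g_one_le n k)

lemma stmt4g_mono (n : ℕ) : StrictMono (stmt4g n) := by
  intro k l hkl
  have hc : (k:ℝ) < l := by exact_mod_cast hkl
  exact Real.rpow_lt_rpow_of_exponent_lt one_lt_two (by gcongr)

lemma stmt4g_double (n k : ℕ) : stmt4g (n+1) (2*k) = stmt4g n k := by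
  unfold stmt4g
  congr 1
  push_cast
  field_simp
  ring

lemma stmt4g_succ (n k : ℕ) : stmt4g n (k+1) = stmt4g n k * (2:ℝ) ^ ((1:ℝ)/2^n) := by
  unfold stmt4g
  rw [← Real.rpow_add two_pos]
  congr 1
  push_cast
  ring

/-- The set `B n k`. -/
def stmt4B {h : ℕ} (κ y : Fin h → ℝ) (n k : ℕ) : Set (ℝ × (Fin h → ℝ)) :=
  {p | stmt4g n k < p.1 ∧ p.1 ≤ stmt4g n (k+1) ∧
    ∀ i, p.2 i ≤ max (stmt4g n k ^ κ i * y i) (stmt4g n (k+1) ^ κ i * y i)}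

set_option maxHeartbeats 1000000 in
lemma stmt4_core {h : ℕ} (μ₁ μ₂ : Measure (ℝ × (Fin h → ℝ))) (κ y : Fin h → ℝ)
    (hfin₁ : μ₁ {p | 1 < p.1} ≠ ⊤) (hfin₂ : μ₂ {p | 1 < p.1} ≠ ⊤)
    (heq : ∀ a b : ℝ, 1 ≤ a → ∀ c : Fin h → ℝ,
      μ₁ {p | a < p.1 ∧ p.1 ≤ b ∧ ∀ i, p.2 i ≤ c i}
        = μ₂ {p | a < p.1 ∧ p.1 ≤ b ∧ ∀ i, p.2 i ≤ c i}) :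
    μ₁ {p | 1 < p.1 ∧ ∀ i, p.2 i ≤ p.1 ^ κ i * y i}
      = μ₂ {p | 1 < p.1 ∧ ∀ i, p.2 i ≤ p.1 ^ κ i * y i} := by
  classical
  set U : ℕ → Set (ℝ × (Fin h → ℝ)) := fun n => ⋃ k, stmt4B κ y n k with hU
  have hBmeas : ∀ n k, MeasurableSet (stmt4B κ y n k) := fun n k => stmt4_measB _ _ _
  have hUmeas : ∀ n, MeasurableSet (U n) := fun n => MeasurableSet.iUnion (hBmeas n)
  have hUsub : ∀ n, U n ⊆ {p | 1 < p.1} := by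
    intro n p hp
    obtain ⟨k, hk⟩ := Set.mem_iUnion.1 hp
    exact lt_of_le_of_lt (stmt4g_one_le n k) hk.1
  have hdisj : ∀ n, Pairwise (Function.onFun Disjoint (stmt4B κ y n)) := by
    intro n k l hkl
    rw [Function.onFun, Set.disjoint_left]
    rintro p ⟨hk1, hk2, -⟩ ⟨hl1, hl2, -⟩
    rcases hkl.lt_or_gt with hlt | hlt
    · exact absurd (lt_of_le_of_lt (hk2.trans ((stmt4g_mono n).monotone hlt)) hl1) (lt_irrefl _)
    · exact absurd (lt_of_le_of_lt (hl2.trans ((stmt4g_mono n).monotone hlt)) hk1) (lt_irrefl _)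
  have hUeq : ∀ n, μ₁ (U n) = μ₂ (U n) := by
    intro n
    rw [hU]
    rw [measure_iUnion (hdisj n) (hBmeas n), measure_iUnion (hdisj n) (hBmeas n)]
    exact tsum_congr fun k => heq _ _ (stmt4g_one_le n k) _
  have hanti : Antitone U := by
    apply antitone_nat_of_succ_le
    intro n p hp
    obtain ⟨j, hj1, hj2, hj3⟩ := Set.mem_iUnion.1 hp
    have hlow : stmt4g n (j/2) ≤ stmt4g (n+1) j := by
      rw [← stmt4g_double n (j/2)]
      exact (stmt4g_mono (n+1)).monotone (Nat.mul_div_le j 2)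
    have hhigh : stmt4g (n+1) (j+1) ≤ stmt4g n (j/2+1) := by
      rw [← stmt4g_double n (j/2+1)]
      exact (stmt4g_mono (n+1)).monotone (by omega)
    have hstep : stmt4g (n+1) j ≤ stmt4g (n+1) (j+1) := (stmt4g_mono (n+1)).monotone (Nat.le_succ j)
    refine Set.mem_iUnion.2 ⟨j / 2, lt_of_le_of_lt hlow hj1, hj2.trans hhigh, fun i => ?_⟩
    refine (hj3 i).trans (max_le ?_ ?_)
    · exact stmt4_rpow_mul_le_max (stmt4g_pos n (j/2)) hlow (hstep.trans hhigh)
    · exact stmt4_rpow_mul_le_max (stmt4g_pos n (j/2)) (hlow.trans hstep) hhigh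
  have hInter : (⋂ n, U n) = {p | 1 < p.1 ∧ ∀ i, p.2 i ≤ p.1 ^ κ i * y i} := by
    apply Set.Subset.antisymm
    · intro p hp
      have hmem : ∀ n, ∃ k, stmt4g n k < p.1 ∧ p.1 ≤ stmt4g n (k+1) ∧
          ∀ i, p.2 i ≤ max (stmt4g n k ^ κ i * y i) (stmt4g n (k+1) ^ κ i * y i) := by
        intro n
        obtain ⟨k, hk⟩ := Set.mem_iUnion.1 (Set.mem_iInter.1 hp n)
        exact ⟨k, hk⟩
      choose kk hkk1 hkk2 hkk3 using hmem
      have hp1 : 1 < p.1 := lt_of_le_of_lt (stmt4g_one_le 0 (kk 0)) (hkk1 0)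
      refine ⟨hp1, fun i => ?_⟩
      have hepos : ∀ n : ℕ, (0:ℝ) < (2:ℝ) ^ ((1:ℝ)/2^n) :=
        fun n => Real.rpow_pos_of_pos two_pos _
      have het : Tendsto (fun n : ℕ => (2:ℝ) ^ ((1:ℝ)/2^n)) atTop (𝓝 1) := by
        have h0 : Tendsto (fun n : ℕ => (1:ℝ) / 2 ^ n) atTop (𝓝 0) := by
          simp only [div_eq_mul_inv, one_mul, ← inv_pow]
          exact tendsto_pow_atTop_nhds_zero_of_lt_one (by norm_num) (by norm_num)
        have hcont : ContinuousAt (fun x : ℝ => (2:ℝ) ^ x) 0 :=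
          Real.continuousAt_const_rpow two_ne_zero
        have := hcont.tendsto.comp h0
        simpa [Function.comp_def] using this
      have hlt : Tendsto (fun n => stmt4g n (kk n)) atTop (𝓝 p.1) := by
        have hub : ∀ n, p.1 / (2:ℝ) ^ ((1:ℝ)/2^n) ≤ stmt4g n (kk n) := by
          intro n
          rw [div_le_iff₀ (hepos n), ← stmt4g_succ n (kk n)]
          exact hkk2 n
        have hlb : ∀ n, stmt4g n (kk n) ≤ p.1 := fun n => (hkk1 n).le
        have hq : Tendsto (fun n : ℕ => p.1 / (2:ℝ) ^ ((1:ℝ)/2^n)) atTop (𝓝 p.1) := by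
          have := Tendsto.div (tendsto_const_nhds (x := p.1)) het one_ne_zero
          simpa [Pi.div_def] using this
        exact tendsto_of_tendsto_of_tendsto_of_le_of_le hq tendsto_const_nhds hub hlb
      have hut : Tendsto (fun n => stmt4g n (kk n + 1)) atTop (𝓝 p.1) := by
        have h1 : Tendsto (fun n => stmt4g n (kk n) * (2:ℝ) ^ ((1:ℝ)/2^n)) atTop
            (𝓝 (p.1 * 1)) := hlt.mul het
        rw [mul_one] at h1
        refine h1.congr fun n => ?_
        rw [← stmt4g_succ n (kk n)]
      have hp1ne : p.1 ≠ 0 := (lt_trans one_pos hp1).ne'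
      have hcont : ContinuousAt (fun s : ℝ => s ^ κ i * y i) p.1 :=
        (Real.continuousAt_rpow_const _ _ (Or.inl hp1ne)).mul continuousAt_const
      have htmax : Tendsto (fun n => max (stmt4g n (kk n) ^ κ i * y i)
          (stmt4g n (kk n + 1) ^ κ i * y i)) atTop (𝓝 (p.1 ^ κ i * y i)) := by
        have t1 := hcont.tendsto.comp hlt
        have t2 := hcont.tendsto.comp hut
        have t3 := t1.max t2
        rw [max_self] at t3
        exact t3
      exact ge_of_tendsto htmax (Eventually.of_forall fun n => hkk3 n i)
    · intro p hp
      refine Set.mem_iInter.2 fun n => ?_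
      have hp1 : (0:ℝ) < p.1 := lt_trans one_pos hp.1
      set x := Real.logb 2 p.1 with hx
      have hxpos : 0 < x := Real.logb_pos one_lt_two hp.1
      have hvpos : 0 < (2:ℝ)^n * x := by positivity
      set m := ⌈(2:ℝ)^n * x⌉₊ with hm
      have hm1 : 1 ≤ m := Nat.one_le_iff_ne_zero.2 (by
        simp only [hm, ne_eq, Nat.ceil_eq_zero, not_le]
        exact hvpos)
      have hrw : (2:ℝ) ^ x = p.1 := Real.rpow_logb two_pos (by norm_num) hp1
      have h1 : stmt4g n (m-1) < p.1 := by
        rw [← hrw]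
        apply Real.rpow_lt_rpow_of_exponent_lt one_lt_two
        rw [div_lt_iff₀ (by positivity)]
        have hceil : (m:ℝ) < (2:ℝ)^n * x + 1 := Nat.ceil_lt_add_one hvpos.le
        have hcast : ((m-1 : ℕ) : ℝ) = (m:ℝ) - 1 := by
          push_cast [Nat.cast_sub hm1]; ring
        rw [hcast]
        linarith [hceil]
      have h2 : p.1 ≤ stmt4g n (m-1+1) := by
        have hmm : m - 1 + 1 = m := Nat.succ_pred_eq_of_pos hm1
        rw [hmm, ← hrw]
        apply Real.rpow_le_rpow_of_exponent_le one_le_two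
        rw [le_div_iff₀ (by positivity)]
        calc x * 2^n = 2^n * x := by ring
          _ ≤ m := Nat.le_ceil _
      refine Set.mem_iUnion.2 ⟨m - 1, h1, h2, fun i => ?_⟩
      exact (hp.2 i).trans (stmt4_rpow_mul_le_max (stmt4g_pos n (m-1)) h1.le h2)
  have hfinU₁ : μ₁ (U 0) ≠ ⊤ := fun htop =>
    hfin₁ (top_le_iff.1 (htop ▸ measure_mono (hUsub 0)))
  have hfinU₂ : μ₂ (U 0) ≠ ⊤ := fun htop =>
    hfin₂ (top_le_iff.1 (htop ▸ measure_mono (hUsub 0)))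
  have t1 : Tendsto (fun n => μ₁ (U n)) atTop (𝓝 (μ₁ (⋂ n, U n))) :=
    tendsto_measure_iInter_atTop (fun n => (hUmeas n).nullMeasurableSet) hanti ⟨0, hfinU₁⟩
  have t2 : Tendsto (fun n => μ₂ (U n)) atTop (𝓝 (μ₂ (⋂ n, U n))) :=
    tendsto_measure_iInter_atTop (fun n => (hUmeas n).nullMeasurableSet) hanti ⟨0, hfinU₂⟩
  rw [hInter] at t1 t2
  have hfn : (fun n => μ₁ (U n)) = fun n => μ₂ (U n) := funext hUeq
  rw [hfn] at t1
  exact tendsto_nhds_unique t1 t2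

set_option maxHeartbeats 1000000 in
/-- Representation of the limiting conditional measure via the homogeneity property:
the measure of `{u₀ > y₀, uᵢ ≤ u₀^{κᵢ} yᵢ}` equals `y₀^{-α} G_h(y₁,…,y_h)`. -/
theorem stmt_4 {h : ℕ} (ν : Measure (ℝ × (Fin h → ℝ))) (α : ℝ) (hα : 0 < α)
    (κ : Fin h → ℝ)
    (hprob : ν {p | 1 ≤ p.1} = 1)
    (hom : ∀ t > 0, ∀ y₀ > 0, ∀ y : Fin h → ℝ,
      ν {p | t * y₀ < p.1 ∧ ∀ i, p.2 i ≤ t ^ κ i * y i}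
        = ENNReal.ofReal (t ^ (-α)) * ν {p | y₀ < p.1 ∧ ∀ i, p.2 i ≤ y i}) :
    ∀ y₀ ≥ (1 : ℝ), ∀ y : Fin h → ℝ,
      ν {p | y₀ < p.1 ∧ ∀ i, p.2 i ≤ p.1 ^ κ i * y i}
        = ENNReal.ofReal (y₀ ^ (-α)) *
            ν {p | 1 ≤ p.1 ∧ ∀ i, p.2 i ≤ p.1 ^ κ i * y i} := by
  classical
  -- tail scaling
  have tail : ∀ t : ℝ, 0 < t →
      ν {p | t < p.1} = ENNReal.ofReal (t ^ (-α)) * ν {p | 1 < p.1} := by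
    intro t ht
    set C : ℕ → Set (ℝ × (Fin h → ℝ)) :=
      fun n => {p | t < p.1 ∧ ∀ i, p.2 i ≤ t ^ κ i * (n:ℝ)} with hC
    set D : ℕ → Set (ℝ × (Fin h → ℝ)) :=
      fun n => {p | 1 < p.1 ∧ ∀ i, p.2 i ≤ (n:ℝ)} with hD
    have hCD : ∀ n, ν (C n) = ENNReal.ofReal (t ^ (-α)) * ν (D n) := by
      intro n
      have := hom t ht 1 one_pos (fun _ => (n:ℝ))
      rw [mul_one] at this
      exact this
    have hCmono : Monotone C := by
      intro n m hnm p hp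
      refine ⟨hp.1, fun i => (hp.2 i).trans ?_⟩
      exact mul_le_mul_of_nonneg_left (by exact_mod_cast hnm)
        (Real.rpow_pos_of_pos ht _).le
    have hDmono : Monotone D := by
      intro n m hnm p hp
      exact ⟨hp.1, fun i => (hp.2 i).trans (by exact_mod_cast hnm)⟩
    have hbnd : ∀ (f : Fin h → ℝ), ∃ n : ℕ, ∀ i, f i ≤ n := by
      intro f
      obtain ⟨n, hn⟩ := exists_nat_ge (∑ j, |f j|)
      refine ⟨n, fun i => ?_⟩
      calc f i ≤ |f i| := le_abs_self _
        _ ≤ ∑ j, |f j| := Finset.single_le_sum (fun j _ => abs_nonneg (f j)) (Finset.mem_univ i)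
        _ ≤ n := hn
    have hCU : (⋃ n, C n) = {p | t < p.1} := by
      apply Set.Subset.antisymm
      · intro p hp; obtain ⟨n, hn⟩ := Set.mem_iUnion.1 hp; exact hn.1
      · intro p hp
        obtain ⟨n, hn⟩ := hbnd (fun i => p.2 i / t ^ κ i)
        refine Set.mem_iUnion.2 ⟨n, hp, fun i => ?_⟩
        have hpos : (0:ℝ) < t ^ κ i := Real.rpow_pos_of_pos ht _
        have := hn i
        rw [div_le_iff₀ hpos] at this
        calc p.2 i ≤ (n:ℝ) * t ^ κ i := this
          _ = t ^ κ i * n := by ring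
    have hDU : (⋃ n, D n) = {p | 1 < p.1} := by
      apply Set.Subset.antisymm
      · intro p hp; obtain ⟨n, hn⟩ := Set.mem_iUnion.1 hp; exact hn.1
      · intro p hp
        obtain ⟨n, hn⟩ := hbnd (fun i => p.2 i)
        exact Set.mem_iUnion.2 ⟨n, hp, hn⟩
    have t1 : Tendsto (fun n => ν (C n)) atTop (𝓝 (ν {p | t < p.1})) := by
      have := tendsto_measure_iUnion_atTop (μ := ν) hCmono
      rwa [hCU] at this
    have t2 : Tendsto (fun n => ν (D n)) atTop (𝓝 (ν {p | 1 < p.1})) := by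
      have := tendsto_measure_iUnion_atTop (μ := ν) hDmono
      rwa [hDU] at this
    have t3 : Tendsto (fun n => ν (C n)) atTop
        (𝓝 (ENNReal.ofReal (t ^ (-α)) * ν {p | 1 < p.1})) := by
      have := ENNReal.Tendsto.const_mul (a := ENNReal.ofReal (t ^ (-α))) t2 (Or.inr ENNReal.ofReal_ne_top)
      exact this.congr fun n => (hCD n).symm
    exact tendsto_nhds_unique t1 t3
  have hsub11 : {p : ℝ × (Fin h → ℝ) | 1 < p.1} ⊆ {p | 1 ≤ p.1} := by
    intro p hp
    simp only [Set.mem_setOf_eq] at hp ⊢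
    exact le_of_lt hp
  have hfin1 : ν {p : ℝ × (Fin h → ℝ) | 1 < p.1} ≤ 1 := by
    rw [← hprob]
    exact measure_mono hsub11
  have hfin1' : ν {p : ℝ × (Fin h → ℝ) | 1 < p.1} ≠ ⊤ :=
    fun htop => by simp [htop] at hfin1
  -- closed tail
  have hge : ∀ s : ℝ, 0 < s →
      ν {p | s ≤ p.1} = ENNReal.ofReal (s ^ (-α)) * ν {p | 1 < p.1} := by
    intro s hs
    set q : ℕ → ℝ := fun n => s * ((n:ℝ)+1)/((n:ℝ)+2) with hq
    have hqpos : ∀ n, 0 < q n := by intro n; rw [hq]; positivity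
    have hqlt : ∀ n, q n < s := by
      intro n
      rw [hq, div_lt_iff₀ (by positivity)]
      nlinarith [hs]
    have hqmono : Monotone q := by
      intro n m hnm
      rw [hq]
      simp only
      rw [div_le_div_iff₀ (by positivity) (by positivity)]
      have : (n:ℝ) ≤ m := by exact_mod_cast hnm
      nlinarith [hs.le]
    have hqlim : Tendsto q atTop (𝓝 s) := by
      have h2 : Tendsto (fun n : ℕ => ((n:ℝ)+1)/((n:ℝ)+2)) atTop (𝓝 1) := by
        have h3 : Tendsto (fun n : ℕ => 1 - 1/((n:ℝ)+2)) atTop (𝓝 (1 - 0)) := by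
          apply Tendsto.const_sub
          have h4 : Tendsto (fun n : ℕ => 1/((n:ℝ)+1)) atTop (𝓝 0) :=
            tendsto_one_div_add_atTop_nhds_zero_nat
          apply squeeze_zero (fun n => by positivity) (fun n => ?_) h4
          apply div_le_div_of_nonneg_left one_pos.le (by positivity)
          linarith
        rw [sub_zero] at h3
        refine h3.congr fun n => ?_
        field_simp
        ring
      have := h2.const_mul s
      rw [mul_one] at this
      refine this.congr fun n => ?_
      rw [hq]; ring
    set V : ℕ → Set (ℝ × (Fin h → ℝ)) := fun n => {p | q n < p.1} with hV
    have hVanti : Antitone V := fun n m hnm p hp => lt_of_le_of_lt (hqmono hnm) hp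
    have hVmeas : ∀ n, MeasurableSet (V n) :=
      fun n => measurableSet_lt measurable_const measurable_fst
    have hVInter : (⋂ n, V n) = {p | s ≤ p.1} := by
      apply Set.Subset.antisymm
      · intro p hp
        by_contra hlt
        have hlt : p.1 < s := not_le.1 hlt
        obtain ⟨n, hn⟩ := (hqlim.eventually (eventually_gt_nhds hlt)).exists
        exact absurd (Set.mem_iInter.1 hp n) (not_lt.2 hn.le)
      · intro p hp
        exact Set.mem_iInter.2 fun n => lt_of_lt_of_le (hqlt n) hp
    have hVval : ∀ n, ν (V n) = ENNReal.ofReal ((q n) ^ (-α)) * ν {p | 1 < p.1} :=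
      fun n => tail (q n) (hqpos n)
    have hfinV : ν (V 0) ≠ ⊤ := by
      rw [hVval 0]
      exact ENNReal.mul_ne_top ENNReal.ofReal_ne_top hfin1'
    have t1 : Tendsto (fun n => ν (V n)) atTop (𝓝 (ν {p | s ≤ p.1})) := by
      have := tendsto_measure_iInter_atTop (μ := ν)
        (fun n => (hVmeas n).nullMeasurableSet) hVanti ⟨0, hfinV⟩
      rwa [hVInter] at this
    have t2 : Tendsto (fun n => ν (V n)) atTop
        (𝓝 (ENNReal.ofReal (s ^ (-α)) * ν {p | 1 < p.1})) := by
      have hc : Tendsto (fun n => ENNReal.ofReal ((q n) ^ (-α))) atTop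
          (𝓝 (ENNReal.ofReal (s ^ (-α)))) := by
        apply (ENNReal.continuous_ofReal.continuousAt).tendsto.comp
        exact ((Real.continuousAt_rpow_const s (-α) (Or.inl hs.ne')).tendsto).comp hqlim
      have := ENNReal.Tendsto.mul_const hc (Or.inr hfin1')
      exact this.congr fun n => (hVval n).symm
    exact tendsto_nhds_unique t1 t2
  have hone : ν {p : ℝ × (Fin h → ℝ) | 1 < p.1} = 1 := by
    have := hge 1 one_pos
    rw [Real.one_rpow, ENNReal.ofReal_one, one_mul] at this
    rw [← this, hprob]
  have hdiffnull : ν ({p : ℝ × (Fin h → ℝ) | 1 ≤ p.1} \ {p | 1 < p.1}) = 0 := by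
    rw [measure_diff hsub11
      (measurableSet_lt measurable_const measurable_fst).nullMeasurableSet
      (by rw [hone]; exact ENNReal.one_ne_top), hprob, hone, tsub_self]
  -- main part
  intro y₀ hy₀ y
  have hy0 : (0:ℝ) < y₀ := lt_of_lt_of_le one_pos hy₀
  set T : (ℝ × (Fin h → ℝ)) → (ℝ × (Fin h → ℝ)) :=
    fun p => (p.1 / y₀, fun i => p.2 i / y₀ ^ κ i) with hT
  have hTmeas : Measurable T := by
    apply Measurable.prodMk
    · exact measurable_fst.div_const _
    · exact measurable_pi_lambda _ fun i => (measurable_snd.eval).div_const _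
  set μ₁ : Measure (ℝ × (Fin h → ℝ)) := ν.map T with hμ₁
  set μ₂ : Measure (ℝ × (Fin h → ℝ)) := ENNReal.ofReal (y₀ ^ (-α)) • ν with hμ₂
  have hrppos : ∀ i, (0:ℝ) < y₀ ^ κ i := fun i => Real.rpow_pos_of_pos hy0 _
  -- preimage of rectangle sets
  have hpreB : ∀ a b : ℝ, ∀ c : Fin h → ℝ,
      T ⁻¹' {p | a < p.1 ∧ p.1 ≤ b ∧ ∀ i, p.2 i ≤ c i}
        = {p | y₀ * a < p.1 ∧ p.1 ≤ y₀ * b ∧ ∀ i, p.2 i ≤ y₀ ^ κ i * c i} := by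
    intro a b c
    ext p
    simp only [hT, Set.mem_preimage, Set.mem_setOf_eq]
    rw [lt_div_iff₀ hy0, div_le_iff₀ hy0]
    constructor
    · rintro ⟨h1, h2, h3⟩
      refine ⟨by linarith, by linarith, fun i => ?_⟩
      have := h3 i
      rw [div_le_iff₀ (hrppos i)] at this
      linarith [this]
    · rintro ⟨h1, h2, h3⟩
      refine ⟨by linarith, by linarith, fun i => ?_⟩
      rw [div_le_iff₀ (hrppos i)]
      linarith [h3 i]
  -- preimage of the curved set
  have hpreS : T ⁻¹' {p | 1 < p.1 ∧ ∀ i, p.2 i ≤ p.1 ^ κ i * y i}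
      = {p | y₀ < p.1 ∧ ∀ i, p.2 i ≤ p.1 ^ κ i * y i} := by
    ext p
    simp only [hT, Set.mem_preimage, Set.mem_setOf_eq]
    rw [lt_div_iff₀ hy0, one_mul]
    constructor
    · rintro ⟨h1, h2⟩
      have hp1 : (0:ℝ) < p.1 := lt_trans hy0 h1
      refine ⟨h1, fun i => ?_⟩
      have := h2 i
      rw [Real.div_rpow hp1.le hy0.le, div_le_iff₀ (hrppos i)] at this
      have heq2 : (p.1 ^ κ i / y₀ ^ κ i * y i) * y₀ ^ κ i = p.1 ^ κ i * y i := by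
        field_simp
      rw [heq2] at this
      exact this
    · rintro ⟨h1, h2⟩
      have hp1 : (0:ℝ) < p.1 := lt_trans hy0 h1
      refine ⟨h1, fun i => ?_⟩
      rw [Real.div_rpow hp1.le hy0.le, div_le_iff₀ (hrppos i)]
      have heq2 : (p.1 ^ κ i / y₀ ^ κ i * y i) * y₀ ^ κ i = p.1 ^ κ i * y i := by
        field_simp
      rw [heq2]
      exact h2 i
  have hpre1 : T ⁻¹' {p : ℝ × (Fin h → ℝ) | 1 < p.1} = {p | y₀ < p.1} := by
    ext p
    simp only [hT, Set.mem_preimage, Set.mem_setOf_eq]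
    rw [lt_div_iff₀ hy0, one_mul]
  -- finiteness
  have hfinμ₁ : μ₁ {p | 1 < p.1} ≠ ⊤ := by
    rw [hμ₁, Measure.map_apply hTmeas (measurableSet_lt measurable_const measurable_fst),
      hpre1, tail y₀ hy0]
    exact ENNReal.mul_ne_top ENNReal.ofReal_ne_top hfin1'
  have hfinμ₂ : μ₂ {p | 1 < p.1} ≠ ⊤ := by
    rw [hμ₂, Measure.smul_apply, smul_eq_mul]
    exact ENNReal.mul_ne_top ENNReal.ofReal_ne_top hfin1'
  -- rectangle equality
  have hAfin : ∀ s : ℝ, 1 ≤ s → ∀ cc : Fin h → ℝ,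
      ν {p | s < p.1 ∧ ∀ i, p.2 i ≤ cc i} ≠ ⊤ := by
    intro s hs cc htop
    have hle : ν {p | s < p.1 ∧ ∀ i, p.2 i ≤ cc i} ≤ 1 := by
      rw [← hprob]
      exact measure_mono fun p hp => le_of_lt (lt_of_le_of_lt hs hp.1)
    rw [htop] at hle
    exact (by simp at hle : False)
  have hdiffset : ∀ x z : ℝ, ∀ cc : Fin h → ℝ,
      {p : ℝ × (Fin h → ℝ) | x < p.1 ∧ p.1 ≤ z ∧ ∀ i, p.2 i ≤ cc i}
        = {p | x < p.1 ∧ ∀ i, p.2 i ≤ cc i} \ {p | z < p.1 ∧ ∀ i, p.2 i ≤ cc i} := by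
    intro x z cc
    ext p
    simp only [Set.mem_setOf_eq, Set.mem_diff]
    constructor
    · rintro ⟨h1, h2, h3⟩
      exact ⟨⟨h1, h3⟩, fun hz => absurd hz.1 (not_lt.2 h2)⟩
    · rintro ⟨⟨h1, h3⟩, hz⟩
      refine ⟨h1, ?_, h3⟩
      by_contra hc
      exact hz ⟨not_le.1 hc, h3⟩
  have heqB : ∀ a b : ℝ, 1 ≤ a → ∀ c : Fin h → ℝ,
      μ₁ {p | a < p.1 ∧ p.1 ≤ b ∧ ∀ i, p.2 i ≤ c i}
        = μ₂ {p | a < p.1 ∧ p.1 ≤ b ∧ ∀ i, p.2 i ≤ c i} := by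
    intro a b hha c
    rw [hμ₁, Measure.map_apply hTmeas (stmt4_measB a b c), hpreB a b c,
      hμ₂, Measure.smul_apply, smul_eq_mul]
    rcases le_or_gt b a with hba | hab
    · have e1 : {p : ℝ × (Fin h → ℝ) | y₀*a < p.1 ∧ p.1 ≤ y₀*b ∧ ∀ i, p.2 i ≤ y₀^κ i * c i}
          = ∅ := by
        rw [Set.eq_empty_iff_forall_notMem]
        rintro p ⟨h1, h2, -⟩
        have : y₀ * b ≤ y₀ * a := mul_le_mul_of_nonneg_left hba hy0.le
        linarith
      have e2 : {p : ℝ × (Fin h → ℝ) | a < p.1 ∧ p.1 ≤ b ∧ ∀ i, p.2 i ≤ c i} = ∅ := by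
        rw [Set.eq_empty_iff_forall_notMem]
        rintro p ⟨h1, h2, -⟩
        linarith
      rw [e1, e2]
      simp
    · have key : ∀ s : ℝ, 0 < s →
          ν {p | y₀ * s < p.1 ∧ ∀ i, p.2 i ≤ y₀ ^ κ i * c i}
            = ENNReal.ofReal (y₀ ^ (-α)) * ν {p | s < p.1 ∧ ∀ i, p.2 i ≤ c i} :=
        fun s hs => hom y₀ hy0 s hs c
      have hb1 : (1:ℝ) ≤ b := hha.trans hab.le
      have hsubν : {p : ℝ × (Fin h → ℝ) | y₀*b < p.1 ∧ ∀ i, p.2 i ≤ y₀^κ i * c i}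
          ⊆ {p | y₀*a < p.1 ∧ ∀ i, p.2 i ≤ y₀^κ i * c i} := by
        rintro p ⟨h1, h2⟩
        have : y₀ * a ≤ y₀ * b := mul_le_mul_of_nonneg_left hab.le hy0.le
        exact ⟨lt_of_le_of_lt this h1, h2⟩
      have hsubν' : {p : ℝ × (Fin h → ℝ) | b < p.1 ∧ ∀ i, p.2 i ≤ c i}
          ⊆ {p | a < p.1 ∧ ∀ i, p.2 i ≤ c i} :=
        fun p hp => ⟨lt_of_le_of_lt hab.le hp.1, hp.2⟩
      have hbfin : ν {p : ℝ × (Fin h → ℝ) | y₀*b < p.1 ∧ ∀ i, p.2 i ≤ y₀^κ i * c i} ≠ ⊤ := by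
        apply hAfin
        calc (1:ℝ) ≤ b := hb1
          _ = 1 * b := (one_mul b).symm
          _ ≤ y₀ * b := mul_le_mul_of_nonneg_right hy₀ (by linarith)
      have hbfin' : ν {p : ℝ × (Fin h → ℝ) | b < p.1 ∧ ∀ i, p.2 i ≤ c i} ≠ ⊤ :=
        hAfin b hb1 c
      rw [hdiffset (y₀*a) (y₀*b), hdiffset a b]
      rw [measure_diff hsubν (stmt4_measA _ _).nullMeasurableSet hbfin]
      rw [measure_diff hsubν' (stmt4_measA _ _).nullMeasurableSet hbfin']
      rw [key a (lt_of_lt_of_le one_pos hha), key b (lt_of_lt_of_le one_pos hb1)]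
      rw [← ENNReal.mul_sub (fun _ _ => ENNReal.ofReal_ne_top)]
  -- apply the core lemma
  have hcore := stmt4_core μ₁ μ₂ κ y hfinμ₁ hfinμ₂ heqB
  rw [hμ₁, Measure.map_apply hTmeas (stmt4_measS 1 κ y), hpreS,
    hμ₂, Measure.smul_apply, smul_eq_mul] at hcore
  -- pass from strict to non-strict at 1
  have hSeq : ν {p : ℝ × (Fin h → ℝ) | 1 < p.1 ∧ ∀ i, p.2 i ≤ p.1 ^ κ i * y i}
      = ν {p | 1 ≤ p.1 ∧ ∀ i, p.2 i ≤ p.1 ^ κ i * y i} := by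
    apply le_antisymm
    · exact measure_mono fun p hp => ⟨hp.1.le, hp.2⟩
    · calc ν {p : ℝ × (Fin h → ℝ) | 1 ≤ p.1 ∧ ∀ i, p.2 i ≤ p.1 ^ κ i * y i}
          ≤ ν ({p : ℝ × (Fin h → ℝ) | 1 < p.1 ∧ ∀ i, p.2 i ≤ p.1 ^ κ i * y i}
              ∪ ({p | 1 ≤ p.1} \ {p | 1 < p.1})) := by
            apply measure_mono
            rintro p ⟨h1, h2⟩
            rcases lt_or_eq_of_le h1 with hlt | heq1
            · exact Or.inl ⟨hlt, h2⟩
            · refine Or.inr ⟨h1, fun hc => ?_⟩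
              have hc' : (1:ℝ) < p.1 := hc
              exact absurd heq1.symm (ne_of_lt hc').symm
        _ ≤ ν {p : ℝ × (Fin h → ℝ) | 1 < p.1 ∧ ∀ i, p.2 i ≤ p.1 ^ κ i * y i}
              + ν ({p : ℝ × (Fin h → ℝ) | 1 ≤ p.1} \ {p | 1 < p.1}) := measure_union_le _ _
        _ = ν {p : ℝ × (Fin h → ℝ) | 1 < p.1 ∧ ∀ i, p.2 i ≤ p.1 ^ κ i * y i} := by
            rw [hdiffnull, add_zero]
  rw [hcore, hSeq]
end

section
/- Let X_t = σ_t Z_t where (Z_t) is i.i.d. with regularly varying right tail of index α > 0, (σ_t) is a nonnegative stationary process with E[σ₀^q] < ∞ for some q > α, and (σ_t) is independent of (Z_t). Then P(X₀ > x, X_h > x) = o(P(Z₀ > x)) as x → ∞ for every h ≥ 1; i.e. (X₀, X_h) is extremally independent. -/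
open MeasureTheory Filter Topology ProbabilityTheory
open Set ENNReal NNReal


lemma dyadic_lemma {t : ℝ} (ht : 1 ≤ t) : ∃ n : ℕ, (2:ℝ)^n ≤ t ∧ t < 2^(n+1) := by
  classical
  have hex : ∃ n : ℕ, t < 2^(n+1) := by
    obtain ⟨n, hn⟩ := pow_unbounded_of_one_lt t (one_lt_two (α := ℝ))
    exact ⟨n, hn.trans_le (pow_le_pow_right₀ one_le_two (Nat.le_succ n))⟩
  refine ⟨Nat.find hex, ?_, Nat.find_spec hex⟩
  rcases Nat.eq_zero_or_pos (Nat.find hex) with h0 | hpos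
  · simpa [h0] using ht
  · have := Nat.find_min hex (Nat.sub_lt hpos one_pos)
    push_neg at this
    have h1 : Nat.find hex - 1 + 1 = Nat.find hex := Nat.succ_pred_eq_of_pos hpos
    rwa [h1] at this

lemma potter {F L : ℝ → ℝ} {α δ : ℝ} (hα : 0 < α) (hδ : 0 < δ)
    (hF : ∀ ⦃a b : ℝ⦄, a ≤ b → F b ≤ F a)
    (hFpos : ∀ x : ℝ, 0 < x → 0 < F x)
    (hL : ∀ x : ℝ, 0 < x → L x = x ^ α * F x)
    (hslow2 : Tendsto (fun x => L (2 * x) / L x) atTop (𝓝 1)) :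
    ∃ x0 : ℝ, 1 ≤ x0 ∧ ∀ y x : ℝ, x0 ≤ y → y ≤ x →
      L y ≤ 2 ^ (α + δ) * (x / y) ^ δ * L x ∧
      L x ≤ 2 ^ (α + δ) * (x / y) ^ δ * L y := by
  set r : ℝ := 2 ^ δ with hr
  have hr1 : 1 < r := by
    have := Real.rpow_lt_rpow_of_exponent_lt (x := 2) one_lt_two hδ
    simpa using this
  have hr0 : 0 < r := by linarith
  have hrinv : r⁻¹ < 1 := inv_lt_one_of_one_lt₀ hr1
  have hev : ∀ᶠ z in atTop, L (2 * z) / L z ∈ Ioo r⁻¹ r :=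
    hslow2 (Ioo_mem_nhds hrinv hr1)
  obtain ⟨x1, hx1⟩ := eventually_atTop.1 hev
  set x0 : ℝ := max x1 1 with hx0
  have hx01 : 1 ≤ x0 := le_max_right _ _
  have hLpos : ∀ z : ℝ, 0 < z → 0 < L z := by
    intro z hz
    rw [hL z hz]
    exact mul_pos (Real.rpow_pos_of_pos hz _) (hFpos z hz)
  have hstep : ∀ z : ℝ, x0 ≤ z → L (2 * z) ≤ r * L z ∧ L z ≤ r * L (2 * z) := by
    intro z hz
    have hz0 : 0 < z := lt_of_lt_of_le one_pos (le_trans hx01 hz)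
    have hLz : 0 < L z := hLpos z hz0
    have h := hx1 z (le_trans (le_max_left _ _) hz)
    constructor
    · have := h.2
      rw [div_lt_iff₀ hLz] at this
      linarith
    · have := h.1
      rw [lt_div_iff₀ hLz] at this
      calc L z = r * (r⁻¹ * L z) := by field_simp
        _ ≤ r * L (2 * z) := by nlinarith
  have hchain : ∀ y : ℝ, x0 ≤ y → ∀ n : ℕ,
      L (2 ^ n * y) ≤ r ^ n * L y ∧ L y ≤ r ^ n * L (2 ^ n * y) := by
    intro y hy n
    induction n with
    | zero => simp
    | succ n ih =>
      have hy0 : 0 < y := lt_of_lt_of_le one_pos (le_trans hx01 hy)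
      have hzy : x0 ≤ 2 ^ n * y := by
        have h1 : (1:ℝ) ≤ 2 ^ n := one_le_pow₀ one_le_two
        nlinarith
      have hs := hstep _ hzy
      have heq : (2:ℝ) ^ (n+1) * y = 2 * (2 ^ n * y) := by ring
      have hrn : (0:ℝ) ≤ r ^ n := by positivity
      constructor
      · rw [heq, pow_succ]
        calc L (2 * (2 ^ n * y)) ≤ r * L (2 ^ n * y) := hs.1
          _ ≤ r * (r ^ n * L y) := by nlinarith [ih.1]
          _ = r ^ n * r * L y := by ring
      · rw [heq, pow_succ]
        calc L y ≤ r ^ n * L (2 ^ n * y) := ih.2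
          _ ≤ r ^ n * (r * L (2 * (2 ^ n * y))) := by nlinarith [hs.2]
          _ = r ^ n * r * L (2 * (2 ^ n * y)) := by ring
  refine ⟨x0, hx01, ?_⟩
  intro y x hy hxy
  have hy0 : 0 < y := lt_of_lt_of_le one_pos (le_trans hx01 hy)
  have hx0' : 0 < x := lt_of_lt_of_le hy0 hxy
  obtain ⟨n, hn1, hn2⟩ := dyadic_lemma ((one_le_div hy0).2 hxy)
  have hny : (2:ℝ) ^ n * y ≤ x := (le_div_iff₀ hy0).1 hn1
  have hny' : x < 2 ^ (n+1) * y := (div_lt_iff₀ hy0).1 hn2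
  have hps : (2:ℝ) ^ (n+1) = 2 * 2 ^ n := by ring
  have hp1 : (0:ℝ) < 2 ^ n * y := by positivity
  have hp2 : (0:ℝ) < 2 ^ (n+1) * y := by positivity
  -- r ^ n ≤ (x/y)^δ  and r^(n+1) ≤ 2^δ * (x/y)^δ
  have hrn_eq : ∀ m : ℕ, r ^ m = ((2:ℝ) ^ m) ^ δ := by
    intro m
    rw [hr, ← Real.rpow_natCast (2:ℝ) m, ← Real.rpow_natCast ((2:ℝ) ^ δ) m,
      ← Real.rpow_mul (by norm_num), ← Real.rpow_mul (by norm_num), mul_comm]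
  have hrn_le : r ^ n ≤ (x / y) ^ δ := by
    rw [hrn_eq n]
    exact Real.rpow_le_rpow (by positivity) hn1 hδ.le
  have hrn1_le : r ^ (n+1) ≤ 2 ^ δ * (x / y) ^ δ := by
    rw [pow_succ, hr]
    calc ((2:ℝ) ^ δ) ^ n * 2 ^ δ ≤ (x/y) ^ δ * 2 ^ δ := by
          have := hrn_le
          rw [hr] at this
          nlinarith [Real.rpow_pos_of_pos (show (0:ℝ) < 2 by norm_num) δ]
      _ = 2 ^ δ * (x/y) ^ δ := by ring
  -- monotone comparisons
  have hA1 : L x ≤ 2 ^ α * L (2 ^ n * y) := by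
    rw [hL x hx0', hL _ hp1]
    have h1 : F x ≤ F (2 ^ n * y) := hF hny
    have h3 : ((2:ℝ) * (2 ^ n * y)) ^ α = 2 ^ α * (2 ^ n * y) ^ α :=
      Real.mul_rpow (by norm_num) hp1.le
    have h2 : x ^ α ≤ 2 ^ α * (2 ^ n * y) ^ α := by
      rw [← h3]
      exact Real.rpow_le_rpow hx0'.le (by nlinarith) hα.le
    calc x ^ α * F x ≤ (2 ^ α * (2 ^ n * y) ^ α) * F (2 ^ n * y) :=
          mul_le_mul h2 h1 (hFpos x hx0').le (by positivity)
      _ = 2 ^ α * ((2 ^ n * y) ^ α * F (2 ^ n * y)) := by ring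
  have hA2 : L (2 ^ (n+1) * y) ≤ 2 ^ α * L x := by
    rw [hL x hx0', hL _ hp2]
    have h1 : F (2 ^ (n+1) * y) ≤ F x := hF hny'.le
    have h3 : ((2:ℝ) * x) ^ α = 2 ^ α * x ^ α := Real.mul_rpow (by norm_num) hx0'.le
    have h2 : ((2:ℝ) ^ (n+1) * y) ^ α ≤ 2 ^ α * x ^ α := by
      rw [← h3]
      exact Real.rpow_le_rpow hp2.le (by nlinarith) hα.le
    calc ((2:ℝ) ^ (n+1) * y) ^ α * F (2 ^ (n+1) * y) ≤ (2 ^ α * x ^ α) * F x :=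
          mul_le_mul h2 h1 (hFpos _ hp2).le (by positivity)
      _ = 2 ^ α * (x ^ α * F x) := by ring
  have hLy : 0 < L y := hLpos y hy0
  have hLx : 0 < L x := hLpos x hx0'
  have hc := hchain y hy
  have h2a : (0:ℝ) < 2 ^ α := Real.rpow_pos_of_pos (by norm_num) α
  have h2d : (1:ℝ) ≤ 2 ^ δ := by linarith [hr1]
  have hxyd : (0:ℝ) < (x/y) ^ δ := Real.rpow_pos_of_pos (by positivity) δ
  have hsum : (2:ℝ) ^ (α + δ) = 2 ^ α * 2 ^ δ := Real.rpow_add (by norm_num) _ _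
  constructor
  · calc L y ≤ r ^ (n+1) * L (2 ^ (n+1) * y) := (hc (n+1)).2
      _ ≤ r ^ (n+1) * (2 ^ α * L x) :=
          mul_le_mul_of_nonneg_left hA2 (by positivity)
      _ ≤ (2 ^ δ * (x/y) ^ δ) * (2 ^ α * L x) :=
          mul_le_mul_of_nonneg_right hrn1_le (mul_nonneg h2a.le hLx.le)
      _ = 2 ^ (α + δ) * (x/y) ^ δ * L x := by rw [hsum]; ring
  · calc L x ≤ 2 ^ α * L (2 ^ n * y) := hA1
      _ ≤ 2 ^ α * (r ^ n * L y) :=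
          mul_le_mul_of_nonneg_left (hc n).1 h2a.le
      _ ≤ 2 ^ α * ((x/y) ^ δ * L y) :=
          mul_le_mul_of_nonneg_left (mul_le_mul_of_nonneg_right hrn_le hLy.le) h2a.le
      _ ≤ (2 ^ α * 2 ^ δ) * ((x/y) ^ δ * L y) := by
          have h1 : (2:ℝ) ^ α ≤ 2 ^ α * 2 ^ δ := by nlinarith
          exact mul_le_mul_of_nonneg_right h1 (mul_nonneg hxyd.le hLy.le)
      _ = 2 ^ (α + δ) * (x/y) ^ δ * L y := by rw [hsum]; ring

lemma SB_bound {Ω : Type*} [MeasurableSpace Ω] (μ : Measure Ω) [IsProbabilityMeasure μ]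
    (S T : Ω → ℝ) (hST : IndepFun S T μ)
    (β q Sq M x H : ℝ) (hβq : β < q) (hM : 1 ≤ M) (hx : 0 < x) (hH : 0 ≤ H)
    (hSq : 0 ≤ Sq)
    (hMark : ∀ a : ℝ, 0 < a → (μ {ω | a ≤ S ω}).toReal ≤ Sq / a ^ q)
    (hTail : ∀ u : ℝ, 1 ≤ u → (μ {ω | x / u < T ω}).toReal ≤ u ^ β * H) :
    (μ {ω | M < S ω ∧ x < S ω * T ω}).toReal ≤
      Sq * 2 ^ β * M ^ (β - q) * H * (1 - (2:ℝ) ^ (β - q))⁻¹ := by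
  have hM0 : (0:ℝ) < M := lt_of_lt_of_le one_pos hM
  set r : ℝ := (2:ℝ) ^ (β - q) with hrdef
  have hr0 : 0 < r := Real.rpow_pos_of_pos two_pos _
  have hr1 : r < 1 := Real.rpow_lt_one_of_one_lt_of_neg one_lt_two (by linarith)
  set u : ℕ → ℝ := fun k => 2 ^ k * M with hu
  have hu0 : ∀ k, (0:ℝ) < u k := fun k => by positivity
  have hu1 : ∀ k, (1:ℝ) ≤ u k := by
    intro k
    have h1 : (1:ℝ) ≤ 2 ^ k := one_le_pow₀ one_le_two
    calc (1:ℝ) = 1 * 1 := by ring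
      _ ≤ 2 ^ k * M := mul_le_mul h1 hM one_pos.le (by positivity)
  set D : ℕ → Set Ω := fun k =>
    S ⁻¹' Set.Ico (u k) (u (k+1)) ∩ T ⁻¹' Set.Ioi (x / u (k+1)) with hD
  -- inclusion
  have hincl : {ω | M < S ω ∧ x < S ω * T ω} ⊆ ⋃ k, D k := by
    rintro ω ⟨h1, h2⟩
    have hS0 : 0 < S ω := lt_trans hM0 h1
    obtain ⟨k, hk1, hk2⟩ := dyadic_lemma ((one_le_div hM0).2 h1.le)
    refine Set.mem_iUnion.2 ⟨k, ⟨⟨(le_div_iff₀ hM0).1 hk1, (div_lt_iff₀ hM0).1 hk2⟩, ?_⟩⟩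
    have hTω : x / S ω < T ω := by
      rw [div_lt_iff₀ hS0]
      linarith [mul_comm (S ω) (T ω)]
    have : x / u (k+1) < x / S ω :=
      div_lt_div_of_pos_left hx hS0 ((div_lt_iff₀ hM0).1 hk2)
    exact lt_trans this hTω
  -- per-term bound
  set K1 : ℝ := Sq * 2 ^ β * M ^ (β - q) * H with hK1
  have hK1n : 0 ≤ K1 := by positivity
  have hbk : ∀ k, μ (D k) ≤ ENNReal.ofReal (K1 * r ^ k) := by
    intro k
    have hmul : μ (D k) = μ (S ⁻¹' Set.Ico (u k) (u (k+1))) * μ (T ⁻¹' Set.Ioi (x / u (k+1))) :=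
      hST.measure_inter_preimage_eq_mul _ _ measurableSet_Ico measurableSet_Ioi
    set a : ℝ := (μ (S ⁻¹' Set.Ico (u k) (u (k+1)))).toReal with ha
    set b : ℝ := (μ (T ⁻¹' Set.Ioi (x / u (k+1)))).toReal with hb
    have ha0 : 0 ≤ a := ENNReal.toReal_nonneg
    have hb0 : 0 ≤ b := ENNReal.toReal_nonneg
    have haM : a ≤ Sq / (u k) ^ q := by
      refine le_trans ?_ (hMark (u k) (hu0 k))
      refine ENNReal.toReal_mono (measure_ne_top μ _) (measure_mono ?_)
      intro ω hω
      exact hω.1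
    have hbM : b ≤ (u (k+1)) ^ β * H := by
      refine le_trans (le_of_eq ?_) (hTail (u (k+1)) (hu1 (k+1)))
      rfl
    have harith : Sq / (u k) ^ q * ((u (k+1)) ^ β * H) = K1 * r ^ k := by
      have hkq : (u k) ^ q = (2:ℝ) ^ ((k:ℝ) * q) * M ^ q := by
        rw [hu]
        simp only
        rw [Real.mul_rpow (by positivity) hM0.le, ← Real.rpow_natCast (2:ℝ) k,
          ← Real.rpow_mul (by norm_num)]
      have hkb : (u (k+1)) ^ β = (2:ℝ) ^ (((k:ℝ)+1) * β) * M ^ β := by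
        rw [hu]
        simp only
        rw [Real.mul_rpow (by positivity) hM0.le, ← Real.rpow_natCast (2:ℝ) (k+1),
          ← Real.rpow_mul (by norm_num)]
        push_cast
        ring_nf
      have hrk : r ^ k = (2:ℝ) ^ ((β - q) * (k:ℝ)) := by
        rw [hrdef, ← Real.rpow_natCast ((2:ℝ) ^ (β - q)) k, ← Real.rpow_mul (by norm_num)]
      have hMs : M ^ (β - q) = M ^ β / M ^ q := Real.rpow_sub hM0 _ _
      have e1 : (2:ℝ) ^ (((k:ℝ)+1) * β) = (2:ℝ) ^ ((k:ℝ) * β) * 2 ^ β := by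
        rw [← Real.rpow_add two_pos]; ring_nf
      have e2 : (2:ℝ) ^ ((β - q) * (k:ℝ)) = (2:ℝ) ^ ((k:ℝ) * β) / 2 ^ ((k:ℝ) * q) := by
        rw [← Real.rpow_sub two_pos]; ring_nf
      rw [hkq, hkb, hrk, hK1, hMs, e1, e2]
      have n1 : ((2:ℝ) ^ ((k:ℝ) * q)) ≠ 0 := ne_of_gt (Real.rpow_pos_of_pos two_pos _)
      have n2 : (M:ℝ) ^ q ≠ 0 := ne_of_gt (Real.rpow_pos_of_pos hM0 _)
      field_simp
    have hab : a * b ≤ K1 * r ^ k := by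
      calc a * b ≤ (Sq / (u k) ^ q) * ((u (k+1)) ^ β * H) :=
            mul_le_mul haM hbM hb0 (div_nonneg hSq (by positivity))
        _ = K1 * r ^ k := harith
    calc μ (D k) = ENNReal.ofReal a * ENNReal.ofReal b := by
          rw [hmul, ha, hb, ENNReal.ofReal_toReal (measure_ne_top μ _),
            ENNReal.ofReal_toReal (measure_ne_top μ _)]
      _ = ENNReal.ofReal (a * b) := (ENNReal.ofReal_mul ha0).symm
      _ ≤ ENNReal.ofReal (K1 * r ^ k) := ENNReal.ofReal_le_ofReal hab
  have hsummable : Summable (fun k : ℕ => K1 * r ^ k) :=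
    (summable_geometric_of_lt_one hr0.le hr1).mul_left K1
  have htsum : ∑' k : ℕ, K1 * r ^ k = K1 * (1 - r)⁻¹ := by
    rw [_root_.tsum_mul_left, _root_.tsum_geometric_of_lt_one hr0.le hr1]
  have hchain : μ {ω | M < S ω ∧ x < S ω * T ω} ≤ ENNReal.ofReal (K1 * (1 - r)⁻¹) := by
    calc μ {ω | M < S ω ∧ x < S ω * T ω} ≤ μ (⋃ k, D k) := measure_mono hincl
      _ ≤ ∑' k, μ (D k) := measure_iUnion_le _
      _ ≤ ∑' k, ENNReal.ofReal (K1 * r ^ k) := ENNReal.tsum_le_tsum hbk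
      _ = ENNReal.ofReal (∑' k, K1 * r ^ k) :=
          (ENNReal.ofReal_tsum_of_nonneg (fun k => by positivity) hsummable).symm
      _ = ENNReal.ofReal (K1 * (1 - r)⁻¹) := by rw [htsum]
  calc (μ {ω | M < S ω ∧ x < S ω * T ω}).toReal
      ≤ (ENNReal.ofReal (K1 * (1 - r)⁻¹)).toReal := ENNReal.toReal_mono ENNReal.ofReal_ne_top hchain
    _ = K1 * (1 - r)⁻¹ := ENNReal.toReal_ofReal (mul_nonneg hK1n (inv_nonneg.2 (by linarith)))
    _ = Sq * 2 ^ β * M ^ (β - q) * H * (1 - r)⁻¹ := by rw [hK1]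


/-- Extremal independence of the stochastic volatility process `X_t = σ_t Z_t`:
`P(X₀ > x, X_h > x) = o(P(Z₀ > x))`. -/
theorem stmt_8 {Ω : Type*} [MeasurableSpace Ω] (μ : Measure Ω) [IsProbabilityMeasure μ]
    (σ Z : ℕ → Ω → ℝ) (hσm : ∀ t, Measurable (σ t)) (hZm : ∀ t, Measurable (Z t))
    (α q : ℝ) (hα : 0 < α) (hq : α < q)
    (ℓ : ℝ → ℝ)
    (hslow : ∀ t > 0, Tendsto (fun x => ℓ (t * x) / ℓ x) atTop (𝓝 1))
    (htail : ∀ x > 0, (μ {ω | x < Z 0 ω}).toReal = x ^ (-α) * ℓ x)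
    (hZindep : iIndepFun Z μ)
    (hZident : ∀ t, IdentDistrib (Z t) (Z 0) μ μ)
    (hσnonneg : ∀ t ω, 0 ≤ σ t ω)
    (hσstat : ∀ t, IdentDistrib (σ t) (σ 0) μ μ)
    (hσmom : Integrable (fun ω => σ 0 ω ^ q) μ)
    (hindep : ∀ h : ℕ, IndepFun (fun ω => (σ 0 ω, σ h ω)) (fun ω => (Z 0 ω, Z h ω)) μ) :
    ∀ h : ℕ, 1 ≤ h →
      Tendsto
        (fun x => (μ {ω | x < σ 0 ω * Z 0 ω ∧ x < σ h ω * Z h ω}).toReal /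
          (μ {ω | x < Z 0 ω}).toReal)
        atTop (𝓝 0) := by
  intro h hh
  classical
  set Fb : ℝ → ℝ := fun x => (μ {ω | x < Z 0 ω}).toReal with hFb
  have hFanti : ∀ ⦃a b : ℝ⦄, a ≤ b → Fb b ≤ Fb a := by
    intro a b hab
    exact ENNReal.toReal_mono (measure_ne_top μ _)
      (measure_mono (fun ω hω => lt_of_le_of_lt hab hω))
  have hFnonneg : ∀ x : ℝ, 0 ≤ Fb x := fun x => ENNReal.toReal_nonneg
  have hFle1 : ∀ x : ℝ, Fb x ≤ 1 := by
    intro x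
    have h0 : μ {ω | x < Z 0 ω} ≤ 1 := prob_le_one
    have h1 := ENNReal.toReal_mono (by simp : (1:ℝ≥0∞) ≠ ⊤) h0
    simpa using h1
  have hslow2 : Tendsto (fun x => ℓ (2 * x) / ℓ x) atTop (𝓝 1) := hslow 2 two_pos
  have hFpos : ∀ x : ℝ, 0 < x → 0 < Fb x := by
    intro x hx
    by_contra hcon
    push_neg at hcon
    have hFx0 : Fb x = 0 := le_antisymm hcon (hFnonneg x)
    have hz : ∀ y : ℝ, x ≤ y → ℓ y = 0 := by
      intro y hy
      have hy0 : 0 < y := lt_of_lt_of_le hx hy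
      have hFy : Fb y = 0 := le_antisymm (hFx0 ▸ hFanti hy) (hFnonneg y)
      have ht : Fb y = y ^ (-α) * ℓ y := htail y hy0
      rw [hFy] at ht
      have hne : y ^ (-α) ≠ 0 := ne_of_gt (Real.rpow_pos_of_pos hy0 _)
      rcases mul_eq_zero.mp ht.symm with hc | hc
      · exact absurd hc hne
      · exact hc
    have hev : (fun y => ℓ (2*y) / ℓ y) =ᶠ[atTop] (fun _ => (0:ℝ)) := by
      filter_upwards [eventually_ge_atTop x] with y hy
      rw [hz (2*y) (by linarith), zero_div]
    have h1 : Tendsto (fun y => ℓ (2*y)/ℓ y) atTop (𝓝 (0:ℝ)) :=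
      Tendsto.congr' hev.symm tendsto_const_nhds
    have h2 := tendsto_nhds_unique hslow2 h1
    norm_num at h2
  have hL : ∀ x : ℝ, 0 < x → ℓ x = x ^ α * Fb x := by
    intro x hx
    have ht : Fb x = x ^ (-α) * ℓ x := htail x hx
    rw [ht, ← mul_assoc, ← Real.rpow_add hx]
    simp
  -- choice of δ
  set δ : ℝ := min α (q - α) / 2 with hδdef
  have hδ : 0 < δ := by
    have h1 : 0 < min α (q - α) := lt_min hα (by linarith)
    positivity
  have hδα : δ < α := by
    have h1 : min α (q - α) ≤ α := min_le_left _ _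
    rw [hδdef]; linarith
  have hδq : α + δ < q := by
    have h1 : min α (q - α) ≤ q - α := min_le_right _ _
    rw [hδdef]; linarith
  obtain ⟨x0, hx01, hpott⟩ := potter hα hδ hFanti hFpos hL hslow2
  have hx00 : 0 < x0 := lt_of_lt_of_le one_pos hx01
  have hC0 : (0:ℝ) < 2 ^ (α + δ) := Real.rpow_pos_of_pos two_pos _
  have hl0pos : 0 < ℓ x0 := by
    rw [hL x0 hx00]
    exact mul_pos (Real.rpow_pos_of_pos hx00 _) (hFpos x0 hx00)
  set C2 : ℝ := 2 ^ (α + δ) + 2 ^ (α + δ) * x0 ^ α / ℓ x0 with hC2def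
  have hC2C : (2:ℝ) ^ (α + δ) ≤ C2 := by
    have h1 : (0:ℝ) ≤ 2 ^ (α + δ) * x0 ^ α / ℓ x0 := by positivity
    rw [hC2def]; linarith
  have hC20 : 0 < C2 := lt_of_lt_of_le hC0 hC2C
  -- lower bound for Fb
  have hFlow : ∀ x : ℝ, x0 ≤ x →
      x0 ^ (α + δ) * x ^ (-(α + δ)) ≤ 2 ^ (α + δ) * x0 ^ α / ℓ x0 * Fb x := by
    intro x hx
    have hxp : 0 < x := lt_of_lt_of_le hx00 hx
    have hp := (hpott x0 x le_rfl hx).1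
    have i1 : (x / x0) ^ δ = x ^ δ / x0 ^ δ := Real.div_rpow hxp.le hx00.le δ
    have hx0d : 0 < x0 ^ δ := Real.rpow_pos_of_pos hx00 δ
    have hp' : ℓ x0 * x0 ^ δ ≤ 2 ^ (α + δ) * x ^ δ * ℓ x := by
      rw [i1] at hp
      calc ℓ x0 * x0 ^ δ ≤ (2 ^ (α + δ) * (x ^ δ / x0 ^ δ) * ℓ x) * x0 ^ δ :=
            mul_le_mul_of_nonneg_right hp hx0d.le
        _ = 2 ^ (α + δ) * x ^ δ * ℓ x := by field_simp
    have i2 : x ^ (-(α + δ)) = (x ^ α)⁻¹ * (x ^ δ)⁻¹ := by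
      rw [Real.rpow_neg hxp.le, Real.rpow_add hxp, mul_inv]
    have i3 : x0 ^ (α + δ) = x0 ^ α * x0 ^ δ := Real.rpow_add hx00 _ _
    have hlx : ℓ x = x ^ α * Fb x := hL x hxp
    have hxa : 0 < x ^ α := Real.rpow_pos_of_pos hxp _
    have hxd : 0 < x ^ δ := Real.rpow_pos_of_pos hxp _
    have hx0a : 0 < x0 ^ α := Real.rpow_pos_of_pos hx00 _
    have key : (x0 ^ α * x0 ^ δ) * ℓ x0 ≤ (2 ^ (α + δ) * x0 ^ α * Fb x) * (x ^ α * x ^ δ) := by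
      calc (x0 ^ α * x0 ^ δ) * ℓ x0 = x0 ^ α * (ℓ x0 * x0 ^ δ) := by ring
        _ ≤ x0 ^ α * (2 ^ (α + δ) * x ^ δ * (x ^ α * Fb x)) := by
            rw [← hlx]; exact mul_le_mul_of_nonneg_left hp' hx0a.le
        _ = (2 ^ (α + δ) * x0 ^ α * Fb x) * (x ^ α * x ^ δ) := by ring
    rw [i2, i3, div_mul_eq_mul_div, le_div_iff₀ hl0pos]
    have e : x0 ^ α * x0 ^ δ * ((x ^ α)⁻¹ * (x ^ δ)⁻¹) * ℓ x0
        = (x0 ^ α * x0 ^ δ * ℓ x0) / (x ^ α * x ^ δ) := by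
      field_simp
    rw [e, div_le_iff₀ (by positivity)]
    calc x0 ^ α * x0 ^ δ * ℓ x0 = (x0 ^ α * x0 ^ δ) * ℓ x0 := by ring
      _ ≤ (2 ^ (α + δ) * x0 ^ α * Fb x) * (x ^ α * x ^ δ) := key
      _ = 2 ^ (α + δ) * x0 ^ α * Fb x * (x ^ α * x ^ δ) := by ring
  -- key upper bound
  have hKB : ∀ u : ℝ, 1 ≤ u → ∀ x : ℝ, x0 ≤ x → Fb (x/u) ≤ u ^ (α + δ) * (C2 * Fb x) := by
    intro u hu x hx
    have hup : 0 < u := lt_of_lt_of_le one_pos hu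
    have hxp : 0 < x := lt_of_lt_of_le hx00 hx
    by_cases hcase : x0 ≤ x / u
    · have hxu : x / u ≤ x := div_le_self hxp.le hu
      have hpot := (hpott (x/u) x hcase hxu).1
      have hdd : x / (x/u) = u := by field_simp
      rw [hdd] at hpot
      have hxup : 0 < x / u := by positivity
      have e : (x/u) ^ (-α) = u ^ α * x ^ (-α) := by
        rw [Real.div_rpow hxp.le hup.le (-α), Real.rpow_neg hup.le, div_inv_eq_mul]
        ring
      calc Fb (x/u) = (x/u) ^ (-α) * ℓ (x/u) := htail _ hxup
        _ ≤ (x/u) ^ (-α) * (2 ^ (α + δ) * u ^ δ * ℓ x) :=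
            mul_le_mul_of_nonneg_left hpot (Real.rpow_nonneg hxup.le _)
        _ = (u ^ α * u ^ δ) * (2 ^ (α + δ) * (x ^ (-α) * ℓ x)) := by rw [e]; ring
        _ = u ^ (α + δ) * (2 ^ (α + δ) * Fb x) := by
            rw [Real.rpow_add hup, ← htail x hxp]
        _ ≤ u ^ (α + δ) * (C2 * Fb x) :=
            mul_le_mul_of_nonneg_left
              (mul_le_mul_of_nonneg_right hC2C (hFnonneg x)) (Real.rpow_nonneg hup.le _)
    · push_neg at hcase
      have h1 : Fb (x/u) ≤ 1 := hFle1 _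
      have hux : x ≤ u * x0 := by
        rw [div_lt_iff₀ hup] at hcase
        nlinarith
      have h2 : (1:ℝ) ≤ (u * x0 / x) ^ (α + δ) :=
        Real.one_le_rpow ((one_le_div hxp).2 hux) (by linarith)
      have e2 : (u * x0 / x) ^ (α + δ) = u ^ (α + δ) * (x0 ^ (α + δ) * x ^ (-(α + δ))) := by
        rw [Real.div_rpow (by positivity) hxp.le (α + δ), Real.mul_rpow hup.le hx00.le,
          Real.rpow_neg hxp.le, div_eq_mul_inv]
        ring
      have h4 : 2 ^ (α + δ) * x0 ^ α / ℓ x0 ≤ C2 := by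
        rw [hC2def]; linarith
      calc Fb (x/u) ≤ 1 := h1
        _ ≤ (u * x0 / x) ^ (α + δ) := h2
        _ = u ^ (α + δ) * (x0 ^ (α + δ) * x ^ (-(α + δ))) := e2
        _ ≤ u ^ (α + δ) * (2 ^ (α + δ) * x0 ^ α / ℓ x0 * Fb x) :=
            mul_le_mul_of_nonneg_left (hFlow x hx) (Real.rpow_nonneg hup.le _)
        _ ≤ u ^ (α + δ) * (C2 * Fb x) :=
            mul_le_mul_of_nonneg_left
              (mul_le_mul_of_nonneg_right h4 (hFnonneg x)) (Real.rpow_nonneg hup.le _)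
  -- moment and Markov
  set Sq : ℝ := ∫ ω, σ 0 ω ^ q ∂μ with hSqdef
  have hSq0 : 0 ≤ Sq := integral_nonneg (fun ω => Real.rpow_nonneg (hσnonneg 0 ω) q)
  have hq0 : 0 < q := lt_trans hα hq
  have hMark0 : ∀ a : ℝ, 0 < a → (μ {ω | a ≤ σ 0 ω}).toReal ≤ Sq / a ^ q := by
    intro a ha
    have haq : 0 < a ^ q := Real.rpow_pos_of_pos ha q
    have hsub : {ω | a ≤ σ 0 ω} ⊆ {ω | a ^ q ≤ σ 0 ω ^ q} :=
      fun ω hω => Real.rpow_le_rpow ha.le hω hq0.le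
    have h1 := mul_meas_ge_le_integral_of_nonneg
      (ae_of_all μ (fun ω => Real.rpow_nonneg (hσnonneg 0 ω) q)) hσmom (a ^ q)
    have h2 : (μ {ω | a ≤ σ 0 ω}).toReal ≤ (μ {ω | a ^ q ≤ σ 0 ω ^ q}).toReal :=
      ENNReal.toReal_mono (measure_ne_top μ _) (measure_mono hsub)
    rw [le_div_iff₀ haq]
    calc (μ {ω | a ≤ σ 0 ω}).toReal * a ^ q
        ≤ (μ {ω | a ^ q ≤ σ 0 ω ^ q}).toReal * a ^ q := mul_le_mul_of_nonneg_right h2 haq.le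
      _ = a ^ q * (μ {ω | a ^ q ≤ σ 0 ω ^ q}).toReal := mul_comm _ _
      _ ≤ Sq := h1
  have hMarkh : ∀ a : ℝ, 0 < a → (μ {ω | a ≤ σ h ω}).toReal ≤ Sq / a ^ q := by
    intro a ha
    have he : μ {ω | a ≤ σ h ω} = μ {ω | a ≤ σ 0 ω} :=
      (hσstat h).measure_mem_eq (measurableSet_Ici (a := a))
    rw [he]; exact hMark0 a ha
  have hFh : ∀ c : ℝ, (μ {ω | c < Z h ω}).toReal = Fb c := by
    intro c
    have he : μ {ω | c < Z h ω} = μ {ω | c < Z 0 ω} :=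
      (hZident h).measure_mem_eq (measurableSet_Ioi (a := c))
    rw [hFb]
    simp only
    rw [he]
  -- independence
  have hZ0h : IndepFun (Z 0) (Z h) μ := hZindep.indepFun (by omega : (0:ℕ) ≠ h)
  have hσZ0 : IndepFun (σ 0) (Z 0) μ := (hindep h).comp measurable_fst measurable_fst
  have hσZh : IndepFun (σ h) (Z h) μ := (hindep h).comp measurable_snd measurable_snd
  -- geometric ratio and constant J
  have hr0 : (0:ℝ) < 2 ^ (α + δ - q) := Real.rpow_pos_of_pos two_pos _
  have hr1 : (2:ℝ) ^ (α + δ - q) < 1 :=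
    Real.rpow_lt_one_of_one_lt_of_neg one_lt_two (by linarith)
  have h1r : (0:ℝ) < 1 - 2 ^ (α + δ - q) := by linarith
  set J : ℝ := 2 * (Sq * 2 ^ (α + δ) * C2 * (1 - (2:ℝ) ^ (α + δ - q))⁻¹) with hJdef
  have hJ0 : 0 ≤ J := by
    rw [hJdef]
    have : (0:ℝ) ≤ (1 - (2:ℝ) ^ (α + δ - q))⁻¹ := inv_nonneg.2 h1r.le
    positivity
  rw [Metric.tendsto_atTop]
  intro ε hε
  -- choose M
  have hMt : Tendsto (fun M : ℝ => J * M ^ (α + δ - q)) atTop (𝓝 0) := by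
    have h0 : Tendsto (fun M : ℝ => M ^ (α + δ - q)) atTop (𝓝 0) := by
      have h1 := tendsto_rpow_neg_atTop (show (0:ℝ) < q - (α + δ) by linarith)
      simpa [show -(q - (α + δ)) = α + δ - q by ring] using h1
    simpa using h0.const_mul J
  obtain ⟨M0, hM0⟩ := eventually_atTop.1
    (hMt.eventually_lt_const (show (0:ℝ) < ε/2 by linarith))
  set M : ℝ := max M0 1 with hMdef
  have hM1 : (1:ℝ) ≤ M := le_max_right _ _
  have hMp : (0:ℝ) < M := lt_of_lt_of_le one_pos hM1
  have hMε : J * M ^ (α + δ - q) < ε / 2 := hM0 M (le_max_left _ _)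
  -- Fb tends to 0
  have hFtop : Tendsto Fb atTop (𝓝 0) := by
    have hg : Tendsto (fun x : ℝ => (2 ^ (α + δ) * ℓ x0 * (x0 ^ δ)⁻¹) * x ^ (δ - α))
        atTop (𝓝 0) := by
      have h1 := tendsto_rpow_neg_atTop (show (0:ℝ) < α - δ by linarith)
      have h2 : Tendsto (fun x : ℝ => x ^ (δ - α)) atTop (𝓝 0) := by
        simpa [show -(α - δ) = δ - α by ring] using h1
      simpa using h2.const_mul (2 ^ (α + δ) * ℓ x0 * (x0 ^ δ)⁻¹)
    apply tendsto_of_tendsto_of_tendsto_of_le_of_le' tendsto_const_nhds hg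
    · exact Eventually.of_forall hFnonneg
    · filter_upwards [eventually_ge_atTop x0] with x hx
      have hxp : 0 < x := lt_of_lt_of_le hx00 hx
      have hp := (hpott x0 x le_rfl hx).2
      have i1 : (x / x0) ^ δ = x ^ δ / x0 ^ δ := Real.div_rpow hxp.le hx00.le δ
      have e1 : x ^ (-α) * x ^ δ = x ^ (δ - α) := by
        rw [← Real.rpow_add hxp]; ring_nf
      calc Fb x = x ^ (-α) * ℓ x := htail x hxp
        _ ≤ x ^ (-α) * (2 ^ (α + δ) * (x / x0) ^ δ * ℓ x0) :=
            mul_le_mul_of_nonneg_left hp (Real.rpow_nonneg hxp.le _)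
        _ = (2 ^ (α + δ) * ℓ x0 * (x0 ^ δ)⁻¹) * (x ^ (-α) * x ^ δ) := by
            rw [i1]; field_simp
        _ = (2 ^ (α + δ) * ℓ x0 * (x0 ^ δ)⁻¹) * x ^ (δ - α) := by rw [e1]
  have hFtopM : Tendsto (fun x => Fb (x / M)) atTop (𝓝 0) :=
    hFtop.comp (Tendsto.atTop_div_const hMp tendsto_id)
  have hcoef : Tendsto (fun x => (C2 * M ^ (α + δ)) * Fb (x / M)) atTop (𝓝 0) := by
    simpa using hFtopM.const_mul (C2 * M ^ (α + δ))
  obtain ⟨N1, hN1⟩ := eventually_atTop.1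
    (hcoef.eventually_lt_const (show (0:ℝ) < ε/2 by linarith))
  refine ⟨max N1 x0, fun x hx => ?_⟩
  have hxx0 : x0 ≤ x := le_trans (le_max_right _ _) hx
  have hxN1 : N1 ≤ x := le_trans (le_max_left _ _) hx
  have hxp : 0 < x := lt_of_lt_of_le hx00 hxx0
  -- the three events
  set SA : Set Ω := {ω | x/M < Z 0 ω ∧ x/M < Z h ω} with hSAdef
  set SBs : Set Ω := {ω | M < σ 0 ω ∧ x < σ 0 ω * Z 0 ω} with hSBdef
  set SCs : Set Ω := {ω | M < σ h ω ∧ x < σ h ω * Z h ω} with hSCdef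
  have hincl : {ω | x < σ 0 ω * Z 0 ω ∧ x < σ h ω * Z h ω} ⊆ (SA ∪ SBs) ∪ SCs := by
    rintro ω ⟨h1, h2⟩
    by_cases hc0 : M < σ 0 ω
    · exact Or.inl (Or.inr ⟨hc0, h1⟩)
    by_cases hch : M < σ h ω
    · exact Or.inr ⟨hch, h2⟩
    push_neg at hc0 hch
    refine Or.inl (Or.inl ⟨?_, ?_⟩)
    · have hσ0 : 0 < σ 0 ω := by
        rcases (hσnonneg 0 ω).eq_or_lt with he | hl
        · exfalso; rw [← he] at h1; simp at h1; linarith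
        · exact hl
      have hZ0 : x / σ 0 ω < Z 0 ω := by
        rw [div_lt_iff₀ hσ0]; linarith [mul_comm (σ 0 ω) (Z 0 ω)]
      exact lt_of_le_of_lt (div_le_div_of_nonneg_left hxp.le hσ0 hc0) hZ0
    · have hσh : 0 < σ h ω := by
        rcases (hσnonneg h ω).eq_or_lt with he | hl
        · exfalso; rw [← he] at h2; simp at h2; linarith
        · exact hl
      have hZh : x / σ h ω < Z h ω := by
        rw [div_lt_iff₀ hσh]; linarith [mul_comm (σ h ω) (Z h ω)]
      exact lt_of_le_of_lt (div_le_div_of_nonneg_left hxp.le hσh hch) hZh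
  -- bounds on the three pieces
  have hSA : (μ SA).toReal ≤ (M ^ (α + δ) * (C2 * Fb x)) * Fb (x/M) := by
    have hprod : μ ((Z 0 ⁻¹' Ioi (x/M)) ∩ (Z h ⁻¹' Ioi (x/M)))
        = μ (Z 0 ⁻¹' Ioi (x/M)) * μ (Z h ⁻¹' Ioi (x/M)) :=
      hZ0h.measure_inter_preimage_eq_mul _ _ measurableSet_Ioi measurableSet_Ioi
    have heq : (μ SA).toReal = Fb (x/M) * Fb (x/M) := by
      rw [hSAdef]
      have hset : {ω | x/M < Z 0 ω ∧ x/M < Z h ω}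
          = (Z 0 ⁻¹' Ioi (x/M)) ∩ (Z h ⁻¹' Ioi (x/M)) := rfl
      rw [hset, hprod, ENNReal.toReal_mul]
      congr 1
      exact hFh (x/M)
    rw [heq]
    exact mul_le_mul_of_nonneg_right (hKB M hM1 x hxx0) (hFnonneg _)
  have hH0 : (0:ℝ) ≤ C2 * Fb x := mul_nonneg hC20.le (hFnonneg x)
  have hSB : (μ SBs).toReal ≤
      Sq * 2 ^ (α + δ) * M ^ (α + δ - q) * (C2 * Fb x) * (1 - (2:ℝ) ^ (α + δ - q))⁻¹ :=
    SB_bound μ (σ 0) (Z 0) hσZ0 (α + δ) q Sq M x (C2 * Fb x) hδq hM1 hxp hH0 hSq0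
      hMark0 (fun u hu => hKB u hu x hxx0)
  have hSC : (μ SCs).toReal ≤
      Sq * 2 ^ (α + δ) * M ^ (α + δ - q) * (C2 * Fb x) * (1 - (2:ℝ) ^ (α + δ - q))⁻¹ :=
    SB_bound μ (σ h) (Z h) hσZh (α + δ) q Sq M x (C2 * Fb x) hδq hM1 hxp hH0 hSq0
      hMarkh (fun u hu => (hFh (x/u)) ▸ (hKB u hu x hxx0))
  -- total bound
  have htot : (μ {ω | x < σ 0 ω * Z 0 ω ∧ x < σ h ω * Z h ω}).toReal
      ≤ (μ SA).toReal + (μ SBs).toReal + (μ SCs).toReal := by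
    have h1 : μ {ω | x < σ 0 ω * Z 0 ω ∧ x < σ h ω * Z h ω} ≤ μ SA + μ SBs + μ SCs :=
      le_trans (measure_mono hincl)
        (le_trans (measure_union_le _ _) (add_le_add (measure_union_le _ _) le_rfl))
    have h2 := ENNReal.toReal_mono
      (ENNReal.add_ne_top.2 ⟨ENNReal.add_ne_top.2 ⟨measure_ne_top μ _, measure_ne_top μ _⟩,
        measure_ne_top μ _⟩) h1
    rwa [ENNReal.toReal_add
        (ENNReal.add_ne_top.2 ⟨measure_ne_top μ _, measure_ne_top μ _⟩) (measure_ne_top μ _),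
      ENNReal.toReal_add (measure_ne_top μ _) (measure_ne_top μ _)] at h2
  have hnum : (μ {ω | x < σ 0 ω * Z 0 ω ∧ x < σ h ω * Z h ω}).toReal
      ≤ ((C2 * M ^ (α + δ)) * Fb (x/M) + J * M ^ (α + δ - q)) * Fb x := by
    have e : (M ^ (α + δ) * (C2 * Fb x)) * Fb (x/M)
        + Sq * 2 ^ (α + δ) * M ^ (α + δ - q) * (C2 * Fb x) * (1 - (2:ℝ) ^ (α + δ - q))⁻¹
        + Sq * 2 ^ (α + δ) * M ^ (α + δ - q) * (C2 * Fb x) * (1 - (2:ℝ) ^ (α + δ - q))⁻¹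
        = ((C2 * M ^ (α + δ)) * Fb (x/M) + J * M ^ (α + δ - q)) * Fb x := by
      rw [hJdef]; ring
    linarith [htot, hSA, hSB, hSC]
  -- conclude
  rw [Real.dist_eq, sub_zero,
    abs_of_nonneg (div_nonneg ENNReal.toReal_nonneg (hFnonneg x))]
  have hd : (μ {ω | x < σ 0 ω * Z 0 ω ∧ x < σ h ω * Z h ω}).toReal / Fb x
      ≤ (C2 * M ^ (α + δ)) * Fb (x/M) + J * M ^ (α + δ - q) :=
    (div_le_iff₀ (hFpos x hxp)).2 hnum
  have hc2 : (C2 * M ^ (α + δ)) * Fb (x/M) < ε/2 := hN1 x hxN1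
  calc (μ {ω | x < σ 0 ω * Z 0 ω ∧ x < σ h ω * Z h ω}).toReal / Fb x
      ≤ (C2 * M ^ (α + δ)) * Fb (x/M) + J * M ^ (α + δ - q) := hd
    _ < ε/2 + ε/2 := add_lt_add hc2 hMε
    _ = ε := by ring
end

section
/- Let Π be the transition kernel of a Markov chain on [0,∞) defined by Π(x, A) = (1 − k(x)) F_R(x^{−φ} A) + k(x) F_R(A), where F_R is a probability distribution on [0,∞), φ > 0, and k : [0,∞) → [0,1] is measurable with lim_{x→∞} k(x) = η. Then for every Borel set A with G(∂A) = 0, lim_{x→∞} Π(x, x^φ A) = G(A), where G(A) = (1 − η) F_R(A) + η δ₀(A). -/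
open MeasureTheory Filter Topology Classical

lemma aux_ball_compl (μ : Measure ℝ) [IsProbabilityMeasure μ] :
    Tendsto (fun R : ℝ => (μ (Metric.ball (0:ℝ) R)ᶜ).toReal) atTop (𝓝 0) := by
  have hnat : Tendsto (fun n : ℕ => μ (Metric.ball (0:ℝ) n)ᶜ) atTop (𝓝 0) := by
    have h := tendsto_measure_iInter_atTop (μ := μ) (s := fun n : ℕ => (Metric.ball (0:ℝ) n)ᶜ)
      (fun n => Metric.isOpen_ball.measurableSet.compl.nullMeasurableSet)
      (fun m n hmn => Set.compl_subset_compl.2 (Metric.ball_subset_ball (by exact_mod_cast hmn)))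
      ⟨0, measure_ne_top μ _⟩
    have hempty : (⋂ n : ℕ, (Metric.ball (0:ℝ) n)ᶜ) = ∅ := by
      ext y
      simp only [Set.mem_iInter, Set.mem_compl_iff, Metric.mem_ball, Set.mem_empty_iff_false,
        iff_false, not_forall, not_not]
      obtain ⟨n, hn⟩ := exists_nat_gt (dist y 0)
      exact ⟨n, hn⟩
    rw [hempty, measure_empty] at h
    exact h
  have hnatR : Tendsto (fun n : ℕ => (μ (Metric.ball (0:ℝ) n)ᶜ).toReal) atTop (𝓝 0) := by
    have := (ENNReal.tendsto_toReal (by simp)).comp hnat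
    exact this
  rw [Metric.tendsto_atTop]
  intro ε hε
  rw [Metric.tendsto_atTop] at hnatR
  obtain ⟨N, hN⟩ := hnatR ε hε
  refine ⟨N, fun R hR => ?_⟩
  have h1 := hN N le_rfl
  have hle : (μ (Metric.ball (0:ℝ) R)ᶜ).toReal ≤ (μ (Metric.ball (0:ℝ) N)ᶜ).toReal :=
    ENNReal.toReal_mono (measure_ne_top μ _)
      (measure_mono (Set.compl_subset_compl.2 (Metric.ball_subset_ball hR)))
  rw [Real.dist_eq, sub_zero, abs_of_nonneg ENNReal.toReal_nonneg] at h1 ⊢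
  exact lt_of_le_of_lt hle h1

lemma aux_toReal_le_one (μ : Measure ℝ) [IsProbabilityMeasure μ] (s : Set ℝ) :
    (μ s).toReal ≤ 1 := by
  have := ENNReal.toReal_mono (by simp) (prob_le_one (μ := μ) (s := s))
  simpa using this


/-- Asymptotic homogeneity of the switching exponential AR(1) transition kernel:
`Π(x, x^φ A) → G(A) = (1-η) F_R(A) + η δ₀(A)` for `G`-continuity sets `A`. -/
theorem stmt_11 (FR : Measure ℝ) [IsProbabilityMeasure FR]
    (φ η : ℝ) (hφ : 0 < φ) (hη0 : 0 ≤ η) (hη1 : η ≤ 1)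
    (k : ℝ → ℝ) (hk : ∀ x, k x ∈ Set.Icc (0 : ℝ) 1) (hkm : Measurable k)
    (hklim : Tendsto k atTop (𝓝 η))
    (Pi : ℝ → Set ℝ → ℝ)
    (hPi : ∀ x > 0, ∀ A : Set ℝ,
      Pi x A = (1 - k x) * (FR ((fun a => x ^ (-φ) * a) '' A)).toReal
        + k x * (FR A).toReal)
    (G : Set ℝ → ℝ)
    (hGdef : ∀ A : Set ℝ,
      G A = (1 - η) * (FR A).toReal + η * (if (0 : ℝ) ∈ A then 1 else 0)) :
    ∀ A : Set ℝ, MeasurableSet A → G (frontier A) = 0 →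
      Tendsto (fun x => Pi x ((fun a => x ^ φ * a) '' A)) atTop (𝓝 (G A)) := by
  intro A hA hG
  have hcancel : ∀ x : ℝ, 0 < x →
      (fun a => x ^ (-φ) * a) '' ((fun a => x ^ φ * a) '' A) = A := by
    intro x hx
    rw [← Set.image_comp]
    have hcomp : ((fun a => x ^ (-φ) * a) ∘ (fun a => x ^ φ * a)) = id := by
      funext a
      simp only [Function.comp_apply, id_eq, ← mul_assoc, ← Real.rpow_add hx]
      norm_num
    rw [hcomp, Set.image_id]
  have hev : (fun x => Pi x ((fun a => x ^ φ * a) '' A))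
      =ᶠ[atTop] fun x => (1 - k x) * (FR A).toReal
        + k x * (FR ((fun a => x ^ φ * a) '' A)).toReal := by
    filter_upwards [eventually_gt_atTop (0:ℝ)] with x hx
    rw [hPi x hx, hcancel x hx]
  rw [tendsto_congr' hev, hGdef A]
  have h1 : Tendsto (fun x => (1 - k x) * (FR A).toReal) atTop
      (𝓝 ((1 - η) * (FR A).toReal)) :=
    (tendsto_const_nhds.sub hklim).mul_const _
  refine h1.add ?_
  -- second term
  rcases eq_or_lt_of_le hη0 with hη | hη
  · -- η = 0
    have h0 : Tendsto (fun x => k x * (FR ((fun a => x ^ φ * a) '' A)).toReal) atTop (𝓝 0) := by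
      apply tendsto_of_tendsto_of_tendsto_of_le_of_le (g := fun _ => (0:ℝ)) (h := k)
        tendsto_const_nhds (by rw [hη]; exact hklim)
      · intro x
        exact mul_nonneg (hk x).1 ENNReal.toReal_nonneg
      · intro x
        calc k x * (FR ((fun a => x ^ φ * a) '' A)).toReal
            ≤ k x * 1 := mul_le_mul_of_nonneg_left (aux_toReal_le_one FR _) (hk x).1
          _ = k x := mul_one _
    have : η * (if (0:ℝ) ∈ A then 1 else 0) = 0 := by rw [← hη]; ring
    rw [this]; exact h0
  · -- η > 0 : 0 ∉ frontier A
    have hfr : (0:ℝ) ∉ frontier A := by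
      intro h0f
      rw [hGdef (frontier A), if_pos h0f, mul_one] at hG
      have h1' : 0 ≤ (1 - η) * (FR (frontier A)).toReal :=
        mul_nonneg (by linarith) ENNReal.toReal_nonneg
      linarith
    by_cases h0A : (0:ℝ) ∈ A
    · -- 0 ∈ interior A
      have hint : (0:ℝ) ∈ interior A := by
        rcases (subset_closure h0A : (0:ℝ) ∈ closure A) |> fun h => h with h
        by_contra hni
        exact hfr ⟨subset_closure h0A, hni⟩
      obtain ⟨ε, hε, hball⟩ := Metric.isOpen_iff.1 isOpen_interior 0 hint
      have hballA : Metric.ball (0:ℝ) ε ⊆ A := hball.trans interior_subset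
      have hRε : Tendsto (fun x : ℝ => x ^ φ * ε) atTop atTop :=
        (tendsto_rpow_atTop hφ).atTop_mul_const hε
      have hcompl : Tendsto (fun x : ℝ => (FR (Metric.ball (0:ℝ) (x ^ φ * ε))ᶜ).toReal)
          atTop (𝓝 0) := (aux_ball_compl FR).comp hRε
      have hlim : Tendsto (fun x => (FR ((fun a => x ^ φ * a) '' A)).toReal) atTop (𝓝 1) := by
        apply tendsto_of_tendsto_of_tendsto_of_le_of_le'
          (g := fun x => 1 - (FR (Metric.ball (0:ℝ) (x ^ φ * ε))ᶜ).toReal)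
          (h := fun _ => (1:ℝ))
          (by simpa using tendsto_const_nhds.sub hcompl) tendsto_const_nhds
        · filter_upwards [eventually_gt_atTop (0:ℝ)] with x hx
          have hxp : (0:ℝ) < x ^ φ := Real.rpow_pos_of_pos hx φ
          have hsub : Metric.ball (0:ℝ) (x ^ φ * ε) ⊆ (fun a => x ^ φ * a) '' A := by
            intro y hy
            rw [Metric.mem_ball, Real.dist_eq, sub_zero] at hy
            refine ⟨(x ^ φ)⁻¹ * y, hballA ?_, ?_⟩
            · rw [Metric.mem_ball, Real.dist_eq, sub_zero, abs_mul,
                abs_of_nonneg (inv_nonneg.2 hxp.le)]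
              rw [inv_mul_lt_iff₀ hxp]
              linarith [hy]
            · field_simp
          have hmono : (FR (Metric.ball (0:ℝ) (x ^ φ * ε))).toReal
              ≤ (FR ((fun a => x ^ φ * a) '' A)).toReal :=
            ENNReal.toReal_mono (measure_ne_top FR _) (measure_mono hsub)
          have hadd : (FR (Metric.ball (0:ℝ) (x ^ φ * ε))).toReal
              + (FR (Metric.ball (0:ℝ) (x ^ φ * ε))ᶜ).toReal = 1 := by
            have := measure_add_measure_compl (μ := FR)
              (measurableSet_ball (x := (0:ℝ)) (ε := x ^ φ * ε))
            have h2 := congrArg ENNReal.toReal this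
            rw [ENNReal.toReal_add (measure_ne_top FR _) (measure_ne_top FR _)] at h2
            simpa using h2
          linarith
        · filter_upwards with x
          exact aux_toReal_le_one FR _
      rw [if_pos h0A, mul_one]
      simpa using hklim.mul hlim
    · -- 0 ∉ closure A
      have hcl : (0:ℝ) ∉ closure A := by
        intro hc
        rcases (closure_eq_interior_union_frontier A ▸ hc : (0:ℝ) ∈ interior A ∪ frontier A) with h | h
        · exact h0A (interior_subset h)
        · exact hfr h
      obtain ⟨ε, hε, hball⟩ :=
        Metric.isOpen_iff.1 (isClosed_closure (s := A)).isOpen_compl 0 hcl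
      have hAout : ∀ a ∈ A, ε ≤ |a| := by
        intro a ha
        by_contra hlt
        push_neg at hlt
        have : a ∈ Metric.ball (0:ℝ) ε := by
          rw [Metric.mem_ball, Real.dist_eq, sub_zero]; exact hlt
        exact (hball this) (subset_closure ha)
      have hRε : Tendsto (fun x : ℝ => x ^ φ * ε) atTop atTop :=
        (tendsto_rpow_atTop hφ).atTop_mul_const hε
      have hcompl : Tendsto (fun x : ℝ => (FR (Metric.ball (0:ℝ) (x ^ φ * ε))ᶜ).toReal)
          atTop (𝓝 0) := (aux_ball_compl FR).comp hRε
      have hlim : Tendsto (fun x => (FR ((fun a => x ^ φ * a) '' A)).toReal) atTop (𝓝 0) := by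
        apply tendsto_of_tendsto_of_tendsto_of_le_of_le' (g := fun _ => (0:ℝ))
          tendsto_const_nhds hcompl
        · filter_upwards with x; exact ENNReal.toReal_nonneg
        · filter_upwards [eventually_gt_atTop (0:ℝ)] with x hx
          have hxp : (0:ℝ) < x ^ φ := Real.rpow_pos_of_pos hx φ
          have hsub : (fun a => x ^ φ * a) '' A ⊆ (Metric.ball (0:ℝ) (x ^ φ * ε))ᶜ := by
            rintro y ⟨a, ha, rfl⟩
            simp only [Set.mem_compl_iff, Metric.mem_ball, Real.dist_eq, sub_zero, not_lt,
              abs_mul, abs_of_nonneg hxp.le]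
            exact mul_le_mul_of_nonneg_left (hAout a ha) hxp.le
          exact ENNReal.toReal_mono (measure_ne_top FR _) (measure_mono hsub)
      rw [if_neg h0A, mul_zero]
      simpa using hklim.mul hlim
end

section
/- Let ε₀ and ξ* be independent random variables with e^{ε₀} regularly varying with right tail index α > 0 and E[e^{qξ*}] < ∞ for some q > α. Then for every c > 0, limsup_{x→∞} P(e^{ε₀} e^{ξ*} > x, e^{ε₀} ≤ cx) / P(e^{ε₀} > x) ≤ C c^{q−α} for some constant C not depending on c; consequently lim_{c→0} limsup_{x→∞} P(e^{ε₀} e^{ξ*} > x, e^{ε₀} ≤ cx)/P(e^{ε₀} > x) = 0. -/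
open MeasureTheory Filter Topology ProbabilityTheory

lemma exists_pow_two (w : ℝ) (hw : 1 ≤ w) : ∃ n : ℕ, (2:ℝ)^n ≤ w ∧ w < 2^(n+1) := by
  have hw0 : (0:ℝ) < w := lt_of_lt_of_le one_pos hw
  refine ⟨⌊Real.logb 2 w⌋₊, ?_, ?_⟩
  · have h1 : ((⌊Real.logb 2 w⌋₊ : ℝ)) ≤ Real.logb 2 w :=
      Nat.floor_le (Real.logb_nonneg one_lt_two hw)
    calc (2:ℝ)^(⌊Real.logb 2 w⌋₊) = (2:ℝ) ^ ((⌊Real.logb 2 w⌋₊ : ℝ)) := by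
          rw [Real.rpow_natCast]
      _ ≤ (2:ℝ) ^ (Real.logb 2 w) := Real.rpow_le_rpow_of_exponent_le one_le_two h1
      _ = w := Real.rpow_logb two_pos (by norm_num) hw0
  · have h2 : Real.logb 2 w < (⌊Real.logb 2 w⌋₊ : ℝ) + 1 := Nat.lt_floor_add_one _
    calc w = (2:ℝ) ^ (Real.logb 2 w) := (Real.rpow_logb two_pos (by norm_num) hw0).symm
      _ < (2:ℝ) ^ (((⌊Real.logb 2 w⌋₊ : ℝ)) + 1) :=
          Real.rpow_lt_rpow_of_exponent_lt one_lt_two h2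
      _ = 2^(⌊Real.logb 2 w⌋₊ + 1) := by
          rw [← Real.rpow_natCast (2:ℝ) (⌊Real.logb 2 w⌋₊ + 1)]
          norm_num

lemma my_geom_le (r : ℝ) (h0 : 0 ≤ r) (h1 : r < 1) (n : ℕ) : ∑ k ∈ Finset.range n, r ^ k ≤ 1/(1-r) := by
  have hr : (0:ℝ) < 1 - r := by linarith
  have e : ∑ k ∈ Finset.range n, r ^ k = (1 - r^n)/(1-r) := by
    rw [geom_sum_eq (ne_of_lt h1) n]
    rw [div_eq_div_iff (by intro h; apply hr.ne'; linarith [sub_eq_zero.1 h] ) hr.ne']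
    ring
  rw [e, div_le_div_iff₀ hr hr]
  have : 0 ≤ r ^ n := pow_nonneg h0 n
  nlinarith

lemma potter_s14 (T : ℝ → ℝ) (x₀ β : ℝ) (hx₀ : 0 < x₀) (hβ : 0 ≤ β)
    (hmono : ∀ ⦃y z : ℝ⦄, y ≤ z → T z ≤ T y) (hnn : ∀ y, 0 ≤ T y)
    (hdbl : ∀ y, x₀ ≤ y → (2:ℝ)^(-β) * T y ≤ T (2*y)) :
    ∀ y z : ℝ, x₀ ≤ y → y ≤ z → T y ≤ (2:ℝ)^β * (z/y)^β * T z := by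
  intro y z hy hyz
  have hy0 : 0 < y := lt_of_lt_of_le hx₀ hy
  have hiter : ∀ n : ℕ, ((2:ℝ)^(-β))^n * T y ≤ T ((2:ℝ)^n * y) := by
    intro n
    induction n with
    | zero => simp
    | succ n ih =>
      have h1 : x₀ ≤ (2:ℝ)^n * y := le_trans hy (le_mul_of_one_le_left hy0.le (one_le_pow₀ one_le_two))
      have h2 := hdbl _ h1
      have hr : (0:ℝ) ≤ (2:ℝ)^(-β) := (Real.rpow_pos_of_pos two_pos _).le
      calc ((2:ℝ)^(-β))^(n+1) * T y = (2:ℝ)^(-β) * (((2:ℝ)^(-β))^n * T y) := by ring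
      _ ≤ (2:ℝ)^(-β) * T ((2:ℝ)^n * y) := mul_le_mul_of_nonneg_left ih hr
      _ ≤ T (2 * ((2:ℝ)^n * y)) := h2
      _ = T ((2:ℝ)^(n+1) * y) := by ring_nf
  have hw : 1 ≤ z / y := (one_le_div hy0).2 hyz
  obtain ⟨n, hn1, hn2⟩ := exists_pow_two (z/y) hw
  have hz2 : z ≤ (2:ℝ)^(n+1) * y := by
    have := (div_lt_iff₀ hy0).1 hn2
    linarith
  have key : ((2:ℝ)^(-β))^(n+1) * T y ≤ T z :=
    le_trans (hiter (n+1)) (hmono hz2)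
  have hb0 : (0:ℝ) < (2:ℝ)^β := Real.rpow_pos_of_pos two_pos _
  have hprod : ((2:ℝ)^β)^(n+1) * ((2:ℝ)^(-β))^(n+1) = 1 := by
    rw [← mul_pow, ← Real.rpow_add two_pos]
    simp
  have step : T y ≤ ((2:ℝ)^β)^(n+1) * T z := by
    calc T y = ((2:ℝ)^β)^(n+1) * (((2:ℝ)^(-β))^(n+1) * T y) := by
          rw [← mul_assoc, hprod, one_mul]
      _ ≤ ((2:ℝ)^β)^(n+1) * T z :=
          mul_le_mul_of_nonneg_left key (pow_nonneg hb0.le _)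
  have hpow : ((2:ℝ)^β)^(n+1) ≤ (2:ℝ)^β * (z/y)^β := by
    have h1 : ((2:ℝ)^β)^(n+1) = (2:ℝ)^β * ((2:ℝ)^β)^n := by ring
    have h2 : ((2:ℝ)^β)^n = ((2:ℝ)^n)^β := by
      rw [← Real.rpow_natCast ((2:ℝ)^β) n, ← Real.rpow_natCast (2:ℝ) n,
        ← Real.rpow_mul two_pos.le, ← Real.rpow_mul two_pos.le, mul_comm]
    have h3 : ((2:ℝ)^n : ℝ)^β ≤ (z/y)^β :=
      Real.rpow_le_rpow (by positivity) hn1 hβ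
    rw [h1, h2]
    exact mul_le_mul_of_nonneg_left h3 hb0.le
  calc T y ≤ ((2:ℝ)^β)^(n+1) * T z := step
    _ ≤ (2:ℝ)^β * (z/y)^β * T z := mul_le_mul_of_nonneg_right hpow (hnn z)

lemma pow_two_rpow (j : ℕ) (a : ℝ) : (((2:ℝ)^j : ℝ))^a = (2:ℝ)^(a * j) := by
  rw [← Real.rpow_natCast 2 j, ← Real.rpow_mul two_pos.le, mul_comm]

lemma trunc_moment {Ω : Type*} [MeasurableSpace Ω] (μ : Measure Ω) [IsProbabilityMeasure μ]
    (Y : Ω → ℝ) (hYm : Measurable Y) (hY0 : ∀ ω, 0 < Y ω)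
    (q x₀ β : ℝ) (hq0 : 0 < q) (hx₀ : 0 < x₀) (hβ : 0 ≤ β) (hβq : β < q)
    (hpot : ∀ y z : ℝ, x₀ ≤ y → y ≤ z →
      (μ {ω | y < Y ω}).toReal ≤ (2:ℝ)^β * (z/y)^β * (μ {ω | z < Y ω}).toReal)
    (z : ℝ) (hz : 2*x₀ ≤ z) :
    ∫ ω, Set.indicator {ω | Y ω ≤ z} (fun ω => Y ω ^ q) ω ∂μ ≤
      (2*x₀)^q + (2:ℝ)^(2*β)/(1 - (2:ℝ)^(β-q)) * (z^q * (μ {ω | z < Y ω}).toReal) := by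
  have hz0 : (0:ℝ) < z := lt_of_lt_of_le (by positivity) hz
  obtain ⟨n, hn1, hn2⟩ := exists_pow_two (z/x₀)
    (by rw [le_div_iff₀ hx₀]; linarith)
  set T : ℝ → ℝ := fun y => (μ {ω | y < Y ω}).toReal with hT
  set band : ℕ → Set Ω := fun k => {ω | z/2^(k+1) < Y ω ∧ Y ω ≤ z/2^k} with hband
  have hbandm : ∀ k, MeasurableSet (band k) := by
    intro k
    exact (measurableSet_lt measurable_const hYm).inter (measurableSet_le hYm measurable_const)
  set F : Ω → ℝ := fun ω => (2*x₀)^q +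
      ∑ k ∈ Finset.range n, Set.indicator (band k) (fun _ => (z/2^k)^q) ω with hF
  -- pointwise bound
  have hpt : ∀ ω, Set.indicator {ω | Y ω ≤ z} (fun ω => Y ω ^ q) ω ≤ F ω := by
    intro ω
    have hsumnn : ∀ (s : Finset ℕ), 0 ≤ ∑ k ∈ s, Set.indicator (band k) (fun _ => (z/2^k)^q) ω :=
      fun s => Finset.sum_nonneg fun k _ =>
        Set.indicator_nonneg (fun _ _ => Real.rpow_nonneg (by positivity) q) ω
    by_cases hYz : Y ω ≤ z
    · rw [Set.indicator_of_mem (by exact hYz)]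
      by_cases h2 : Y ω ≤ 2*x₀
      · have h3 : Y ω ^ q ≤ (2*x₀)^q := Real.rpow_le_rpow (hY0 ω).le h2 hq0.le
        have := hsumnn (Finset.range n)
        simp only [hF]; linarith
      · push_neg at h2
        obtain ⟨m, hm1, hm2⟩ := exists_pow_two (z/Y ω) ((one_le_div (hY0 ω)).2 hYz)
        have hYle : Y ω ≤ z / 2^m := by
          rw [le_div_iff₀ (by positivity)]
          calc Y ω * 2^m ≤ Y ω * (z / Y ω) := by
                exact mul_le_mul_of_nonneg_left hm1 (hY0 ω).le
            _ = z := by rw [mul_comm, div_mul_cancel₀ _ (hY0 ω).ne']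
        have hmn : m < n := by
          by_contra hc
          push_neg at hc
          have h4 : z / 2^m ≤ z / 2^n :=
            div_le_div_of_nonneg_left hz0.le (by positivity) (pow_le_pow_right₀ one_le_two hc)
          have h5 : z / 2^n < 2*x₀ := by
            rw [div_lt_iff₀ (by positivity)]
            have := (div_lt_iff₀ hx₀).1 hn2
            calc z < 2^(n+1) * x₀ := this
              _ = 2*x₀*2^n := by ring
          linarith
        have hωm : ω ∈ band m := by
          have hA : z / 2^(m+1) < Y ω := by
            rw [div_lt_iff₀ (by positivity)]
            have := (div_lt_iff₀ (hY0 ω)).1 hm2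
            nlinarith [hY0 ω]
          exact ⟨hA, hYle⟩
        have h6 : Y ω ^ q ≤ (z/2^m)^q := Real.rpow_le_rpow (hY0 ω).le hYle hq0.le
        have h7 : Set.indicator (band m) (fun _ => (z/2^m)^q) ω ≤
            ∑ k ∈ Finset.range n, Set.indicator (band k) (fun _ => (z/2^k)^q) ω :=
          Finset.single_le_sum (f := fun k => Set.indicator (band k) (fun _ => (z/2^k)^q) ω)
            (fun k _ => Set.indicator_nonneg (fun _ _ => Real.rpow_nonneg (by positivity) q) ω)
            (Finset.mem_range.2 hmn)
        rw [Set.indicator_of_mem hωm] at h7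
        have h8 : (0:ℝ) ≤ (2*x₀)^q := Real.rpow_nonneg (by positivity) q
        simp only [hF]; linarith
    · rw [Set.indicator_of_notMem (by exact hYz)]
      have h8 : (0:ℝ) ≤ (2*x₀)^q := Real.rpow_nonneg (by positivity) q
      have := hsumnn (Finset.range n)
      simp only [hF]; linarith
  -- integrability
  have hLm : Measurable (fun ω => Set.indicator {ω | Y ω ≤ z} (fun ω => Y ω ^ q) ω) := by
    exact Measurable.indicator ((Real.continuous_rpow_const hq0.le).measurable.comp hYm)
      (measurableSet_le hYm measurable_const)
  have hLint : Integrable (fun ω => Set.indicator {ω | Y ω ≤ z} (fun ω => Y ω ^ q) ω) μ := by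
    refine (integrable_const (z^q)).mono' hLm.aestronglyMeasurable (ae_of_all _ fun ω => ?_)
    rw [Real.norm_eq_abs, abs_of_nonneg
      (Set.indicator_nonneg (fun x _ => Real.rpow_nonneg (hY0 x).le q) ω)]
    by_cases hω : Y ω ≤ z
    · rw [Set.indicator_of_mem (by exact hω)]
      exact Real.rpow_le_rpow (hY0 ω).le hω hq0.le
    · rw [Set.indicator_of_notMem (by exact hω)]
      exact Real.rpow_nonneg hz0.le q
  have hFint : Integrable F μ := by
    refine (integrable_const _).add (integrable_finset_sum _ fun k _ => ?_)
    exact (integrable_const _).indicator (hbandm k)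
  -- integrate
  have hint : ∫ ω, Set.indicator {ω | Y ω ≤ z} (fun ω => Y ω ^ q) ω ∂μ ≤ ∫ ω, F ω ∂μ :=
    integral_mono hLint hFint hpt
  have hFval : ∫ ω, F ω ∂μ = (2*x₀)^q +
      ∑ k ∈ Finset.range n, (μ (band k)).toReal * (z/2^k)^q := by
    rw [hF]
    rw [integral_add (integrable_const _) (integrable_finset_sum _ fun k _ =>
      (integrable_const _).indicator (hbandm k))]
    rw [integral_const]
    simp only [measure_univ, ENNReal.toReal_one, probReal_univ, one_smul]
    congr 1
    rw [integral_finset_sum _ fun k _ => (integrable_const _).indicator (hbandm k)]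
    refine Finset.sum_congr rfl fun k _ => ?_
    rw [integral_indicator_const _ (hbandm k), smul_eq_mul]; rfl
  -- bound each band term
  have hterm : ∀ k ∈ Finset.range n, (μ (band k)).toReal * (z/2^k)^q ≤
      (2:ℝ)^(2*β) * ((2:ℝ)^(β-q))^k * (z^q * T z) := by
    intro k hk
    have hk' : k + 1 ≤ n := Finset.mem_range.1 hk
    have hy1 : x₀ ≤ z / 2^(k+1) := by
      rw [le_div_iff₀ (by positivity)]
      calc x₀ * 2^(k+1) ≤ x₀ * 2^n := by
            exact mul_le_mul_of_nonneg_left (pow_le_pow_right₀ one_le_two hk') hx₀.le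
        _ ≤ x₀ * (z/x₀) := mul_le_mul_of_nonneg_left hn1 hx₀.le
        _ = z := by field_simp
    have hy2 : z / 2^(k+1) ≤ z := div_le_self hz0.le (one_le_pow₀ one_le_two)
    have hμ1 : (μ (band k)).toReal ≤ T (z/2^(k+1)) := by
      apply ENNReal.toReal_mono (measure_ne_top μ _)
      apply measure_mono
      intro ω hω
      exact hω.1
    have hμ2 : T (z/2^(k+1)) ≤ (2:ℝ)^β * (z/(z/2^(k+1)))^β * T z := hpot _ _ hy1 hy2
    have he : z/(z/2^(k+1)) = 2^(k+1) := by
      field_simp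
    rw [he] at hμ2
    have hTnn : 0 ≤ T z := ENNReal.toReal_nonneg
    have hcnn : (0:ℝ) ≤ (z/2^k)^q := Real.rpow_nonneg (by positivity) q
    calc (μ (band k)).toReal * (z/2^k)^q
        ≤ ((2:ℝ)^β * ((2:ℝ)^(k+1):ℝ)^β * T z) * (z/2^k)^q :=
          mul_le_mul_of_nonneg_right (le_trans hμ1 hμ2) hcnn
      _ = (2:ℝ)^(2*β) * ((2:ℝ)^(β-q))^k * (z^q * T z) := by
          rw [Real.div_rpow hz0.le (by positivity), pow_two_rpow (k+1) β, pow_two_rpow k q,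
            ← Real.rpow_natCast ((2:ℝ)^(β-q)) k, ← Real.rpow_mul two_pos.le]
          push_cast
          rw [div_eq_mul_inv]
          have key : (2:ℝ)^β * (2:ℝ)^(β*((k:ℝ)+1)) * ((2:ℝ)^(q*(k:ℝ)))⁻¹ =
              (2:ℝ)^(2*β) * (2:ℝ)^((β-q)*(k:ℝ)) := by
            rw [← Real.rpow_neg two_pos.le, ← Real.rpow_add two_pos,
              ← Real.rpow_add two_pos, ← Real.rpow_add two_pos]
            congr 1
            ring
          linear_combination (T z * z^q) * key
  -- sum up
  have hsum : ∑ k ∈ Finset.range n, (μ (band k)).toReal * (z/2^k)^q ≤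
      (2:ℝ)^(2*β)/(1 - (2:ℝ)^(β-q)) * (z^q * T z) := by
    have hr0 : (0:ℝ) ≤ (2:ℝ)^(β-q) := (Real.rpow_pos_of_pos two_pos _).le
    have hr1 : (2:ℝ)^(β-q) < 1 := by
      rw [← Real.rpow_zero 2]
      exact Real.rpow_lt_rpow_of_exponent_lt one_lt_two (by linarith)
    calc ∑ k ∈ Finset.range n, (μ (band k)).toReal * (z/2^k)^q
        ≤ ∑ k ∈ Finset.range n, (2:ℝ)^(2*β) * ((2:ℝ)^(β-q))^k * (z^q * T z) :=
          Finset.sum_le_sum hterm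
      _ = (2:ℝ)^(2*β) * (∑ k ∈ Finset.range n, ((2:ℝ)^(β-q))^k) * (z^q * T z) := by
          rw [← Finset.sum_mul, ← Finset.mul_sum]
      _ ≤ (2:ℝ)^(2*β) * (1/(1 - (2:ℝ)^(β-q))) * (z^q * T z) := by
          refine mul_le_mul_of_nonneg_right (mul_le_mul_of_nonneg_left
            (my_geom_le _ hr0 hr1 n) (Real.rpow_pos_of_pos two_pos _).le) ?_
          exact mul_nonneg (Real.rpow_nonneg hz0.le q) ENNReal.toReal_nonneg
      _ = (2:ℝ)^(2*β)/(1 - (2:ℝ)^(β-q)) * (z^q * T z) := by ring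
  calc ∫ ω, Set.indicator {ω | Y ω ≤ z} (fun ω => Y ω ^ q) ω ∂μ ≤ ∫ ω, F ω ∂μ := hint
    _ = (2*x₀)^q + ∑ k ∈ Finset.range n, (μ (band k)).toReal * (z/2^k)^q := hFval
    _ ≤ (2*x₀)^q + (2:ℝ)^(2*β)/(1 - (2:ℝ)^(β-q)) * (z^q * T z) := by linarith

/-- Negligibility of the truncated product: if `e^{ε₀}` is regularly varying with index
`α` and `ξ*` is independent with `E[e^{qξ*}] < ∞` for some `q > α`, then
`limsup_{x→∞} P(e^{ε₀}e^{ξ*} > x, e^{ε₀} ≤ cx)/P(e^{ε₀} > x) ≤ C c^{q-α}`,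
and the iterated limit as `c → 0⁺` is `0`. -/
theorem stmt_14 {Ω : Type*} [MeasurableSpace Ω] (μ : Measure Ω) [IsProbabilityMeasure μ]
    (ε ξ : Ω → ℝ) (hεm : Measurable ε) (hξm : Measurable ξ)
    (hindep : IndepFun ε ξ μ)
    (α q : ℝ) (hα : 0 < α) (hq : α < q)
    (ℓ : ℝ → ℝ)
    (hslow : ∀ t > 0, Tendsto (fun x => ℓ (t * x) / ℓ x) atTop (𝓝 1))
    (htail : ∀ x > 0, (μ {ω | x < Real.exp (ε ω)}).toReal = x ^ (-α) * ℓ x)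
    (hmom : Integrable (fun ω => Real.exp (q * ξ ω)) μ) :
    ∃ C : ℝ,
      (∀ c > 0, Filter.limsup
        (fun x => (μ {ω | x < Real.exp (ε ω) * Real.exp (ξ ω) ∧
            Real.exp (ε ω) ≤ c * x}).toReal / (μ {ω | x < Real.exp (ε ω)}).toReal)
        atTop ≤ C * c ^ (q - α)) ∧
      Tendsto
        (fun c => Filter.limsup
          (fun x => (μ {ω | x < Real.exp (ε ω) * Real.exp (ξ ω) ∧
              Real.exp (ε ω) ≤ c * x}).toReal / (μ {ω | x < Real.exp (ε ω)}).toReal)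
          atTop)
        (𝓝[>] 0) (𝓝 0) := by
  have hY0 : ∀ ω, 0 < Real.exp (ε ω) := fun ω => Real.exp_pos _
  have hYm : Measurable (fun ω => Real.exp (ε ω)) := Real.measurable_exp.comp hεm
  have hZm : Measurable (fun ω => Real.exp (ξ ω)) := Real.measurable_exp.comp hξm
  have hq0 : (0:ℝ) < q := lt_trans hα hq
  set T : ℝ → ℝ := fun y => (μ {ω | y < Real.exp (ε ω)}).toReal with hTdef
  have hTnn : ∀ y, 0 ≤ T y := fun y => ENNReal.toReal_nonneg
  have hTmono : ∀ ⦃y z : ℝ⦄, y ≤ z → T z ≤ T y := fun y z hyz =>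
    ENNReal.toReal_mono (measure_ne_top μ _)
      (measure_mono fun ω hω => lt_of_le_of_lt hyz hω)
  set β : ℝ := (α + q)/2 with hβdef
  have hαβ : α < β := by rw [hβdef]; linarith
  have hβq : β < q := by rw [hβdef]; linarith
  have hβ0 : 0 < β := lt_trans hα hαβ
  -- ratio limit
  have hTrat : ∀ t : ℝ, 0 < t → Tendsto (fun x => T (t*x) / T x) atTop (𝓝 (t^(-α))) := by
    intro t ht
    have heq : (fun x => T (t*x)/T x) =ᶠ[atTop] fun x => t^(-α) * (ℓ (t*x) / ℓ x) := by
      filter_upwards [eventually_gt_atTop (0:ℝ)] with x hx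
      have h1 : T (t*x) = x^(-α) * (t^(-α) * ℓ (t*x)) := by
        show (μ {ω | t*x < Real.exp (ε ω)}).toReal = _
        rw [htail (t*x) (by positivity), Real.mul_rpow ht.le hx.le]
        ring
      have h2 : T x = x^(-α) * ℓ x := htail x hx
      rw [h1, h2, mul_div_mul_left _ _ (ne_of_gt (Real.rpow_pos_of_pos hx _)), mul_div_assoc]
    rw [tendsto_congr' heq]
    have h3 := (hslow t ht).const_mul (t^(-α))
    simpa using h3
  -- doubling
  have h2a : (2:ℝ)^(-β) < (2:ℝ)^(-α) :=
    Real.rpow_lt_rpow_of_exponent_lt one_lt_two (by linarith)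
  have hev : ∀ᶠ x in atTop, (2:ℝ)^(-β) < T (2*x) / T x :=
    (hTrat 2 two_pos).eventually (lt_mem_nhds h2a)
  obtain ⟨a, ha⟩ := eventually_atTop.1 hev
  set x₀ : ℝ := max a 1 with hx₀def
  have hx₀1 : (1:ℝ) ≤ x₀ := le_max_right _ _
  have hx₀pos : (0:ℝ) < x₀ := lt_of_lt_of_le one_pos hx₀1
  have hTposdbl : ∀ y, x₀ ≤ y → (0 < T y ∧ (2:ℝ)^(-β) * T y ≤ T (2*y)) := by
    intro y hy
    have h := ha y (le_trans (le_max_left _ _) hy)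
    have hTy : 0 < T y := by
      rcases lt_or_eq_of_le (hTnn y) with h' | h'
      · exact h'
      · exfalso
        rw [← h', div_zero] at h
        exact absurd h (not_lt.2 (Real.rpow_pos_of_pos two_pos _).le)
    exact ⟨hTy, le_of_lt ((lt_div_iff₀ hTy).1 h)⟩
  have hd : ∀ y, x₀ ≤ y → (2:ℝ)^(-β) * T y ≤ T (2*y) := fun y hy => (hTposdbl y hy).2
  have hP := potter_s14 T x₀ β hx₀pos hβ0.le hTmono hTnn hd
  have hTpos : ∀ z, x₀ ≤ z → 0 < T z := fun z hz => (hTposdbl z hz).1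
  set M : ℝ := ∫ ω, Real.exp (q * ξ ω) ∂μ with hMdef
  have hM0 : 0 ≤ M := integral_nonneg fun ω => (Real.exp_pos _).le
  set K : ℝ := (2:ℝ)^(2*β)/(1 - (2:ℝ)^(β-q)) with hKdef
  have hr1 : (2:ℝ)^(β-q) < 1 := by
    rw [← Real.rpow_zero 2]
    exact Real.rpow_lt_rpow_of_exponent_lt one_lt_two (by linarith)
  have hK0 : 0 ≤ K := div_nonneg (Real.rpow_nonneg two_pos.le _) (by linarith)
  -- ξ-side integrability
  have hZq : ∀ ω, Real.exp (ξ ω) ^ q = Real.exp (q * ξ ω) := fun ω => by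
    rw [← Real.exp_mul, mul_comm]
  have hZqint : Integrable (fun ω => Real.exp (ξ ω) ^ q) μ :=
    hmom.congr (Filter.Eventually.of_forall fun ω => (hZq ω).symm)
  have hMeq : ∫ ω, Real.exp (ξ ω) ^ q ∂μ = M :=
    integral_congr_ae (Filter.Eventually.of_forall fun ω => hZq ω)
  -- main per-c estimate
  have hmain : ∀ c : ℝ, 0 < c →
      Filter.limsup
        (fun x => (μ {ω | x < Real.exp (ε ω) * Real.exp (ξ ω) ∧
            Real.exp (ε ω) ≤ c * x}).toReal / (μ {ω | x < Real.exp (ε ω)}).toReal)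
        atTop ≤ M * K * c ^ (q - α) ∧
      0 ≤ Filter.limsup
        (fun x => (μ {ω | x < Real.exp (ε ω) * Real.exp (ξ ω) ∧
            Real.exp (ε ω) ≤ c * x}).toReal / (μ {ω | x < Real.exp (ε ω)}).toReal)
        atTop := by
    intro c hc
    set num : ℝ → ℝ := fun x => (μ {ω | x < Real.exp (ε ω) * Real.exp (ξ ω) ∧
        Real.exp (ε ω) ≤ c * x}).toReal with hnumdef
    set g : ℝ → ℝ := fun x => M*(2*x₀)^q * (x^(-q)/T x) + M*K*c^q * (T (c*x)/T x) with hgdef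
    have hratio_nn : ∀ x, 0 ≤ num x / T x := fun x =>
      div_nonneg ENNReal.toReal_nonneg ENNReal.toReal_nonneg
    -- the key eventual bound
    have hkey : ∀ᶠ x in atTop, num x / T x ≤ g x := by
      filter_upwards [eventually_ge_atTop x₀, eventually_ge_atTop (2*x₀/c),
        eventually_gt_atTop (0:ℝ)] with x hx1 hx2 hx0
      have hTx : 0 < T x := hTpos x hx1
      have hcx2 : 2*x₀ ≤ c*x := by
        have := (div_le_iff₀ hc).1 hx2
        linarith [mul_comm x c]
      have hcx0 : 0 < c*x := by positivity
      -- Markov + independence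
      set Xf : Ω → ℝ := fun ω =>
        Set.indicator {ω | Real.exp (ε ω) ≤ c*x} (fun ω => Real.exp (ε ω) ^ q) ω with hXfdef
      set Zq : Ω → ℝ := fun ω => Real.exp (ξ ω) ^ q with hZqdef
      have hXfnn : ∀ ω, 0 ≤ Xf ω := fun ω =>
        Set.indicator_nonneg (fun ω _ => Real.rpow_nonneg (hY0 ω).le q) ω
      have hZqnn : ∀ ω, 0 ≤ Zq ω := fun ω => Real.rpow_nonneg (Real.exp_pos _).le q
      have hXfm : Measurable Xf :=
        Measurable.indicator ((Real.continuous_rpow_const hq0.le).measurable.comp hYm)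
          (measurableSet_le hYm measurable_const)
      have hZqm : Measurable Zq := (Real.continuous_rpow_const hq0.le).measurable.comp hZm
      have hindep2 : IndepFun Xf Zq μ := by
        have hφm : Measurable (fun s : ℝ =>
            Set.indicator {s : ℝ | Real.exp s ≤ c*x} (fun s => Real.exp s ^ q) s) :=
          Measurable.indicator
            ((Real.continuous_rpow_const hq0.le).measurable.comp Real.measurable_exp)
            (measurableSet_le Real.measurable_exp measurable_const)
        have hψm : Measurable (fun s : ℝ => Real.exp s ^ q) :=
          (Real.continuous_rpow_const hq0.le).measurable.comp Real.measurable_exp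
        exact hindep.comp hφm hψm
      have hXfZqint : Integrable (fun ω => Xf ω * Zq ω) μ :=
        Integrable.bdd_mul hZqint hXfm.aestronglyMeasurable
          (c := (c*x)^q) (ae_of_all _ fun ω => by
            rw [Real.norm_eq_abs, abs_of_nonneg (hXfnn ω)]
            by_cases hω : Real.exp (ε ω) ≤ c*x
            · rw [hXfdef]
              simp only
              rw [Set.indicator_of_mem (show ω ∈ {ω | Real.exp (ε ω) ≤ c*x} from hω)]
              exact Real.rpow_le_rpow (hY0 ω).le hω hq0.le
            · rw [hXfdef]
              simp only
              rw [Set.indicator_of_notMem (show ω ∉ {ω | Real.exp (ε ω) ≤ c*x} from hω)]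
              exact Real.rpow_nonneg hcx0.le q)
      set E : Set Ω := {ω | x < Real.exp (ε ω) * Real.exp (ξ ω) ∧ Real.exp (ε ω) ≤ c*x}
        with hEdef
      have hEm : MeasurableSet E :=
        (measurableSet_lt measurable_const (hYm.mul hZm)).inter
          (measurableSet_le hYm measurable_const)
      have hpt : ∀ ω, Set.indicator E (fun _ => (1:ℝ)) ω ≤ x^(-q) * (Xf ω * Zq ω) := by
        intro ω
        by_cases hω : ω ∈ E
        · rw [Set.indicator_of_mem hω]
          obtain ⟨h1, h2⟩ := hω
          have hYq : Xf ω = Real.exp (ε ω) ^ q :=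
            Set.indicator_of_mem (show ω ∈ {ω | Real.exp (ε ω) ≤ c*x} from h2) _
          have hxq : x^q < (Real.exp (ε ω) * Real.exp (ξ ω))^q :=
            Real.rpow_lt_rpow hx0.le h1 hq0
          rw [Real.mul_rpow (hY0 ω).le (Real.exp_pos _).le] at hxq
          have hxqpos : 0 < x^q := Real.rpow_pos_of_pos hx0 q
          rw [hYq, hZqdef]
          simp only
          rw [Real.rpow_neg hx0.le, ← div_eq_inv_mul, le_div_iff₀ hxqpos, one_mul]
          exact hxq.le
        · rw [Set.indicator_of_notMem hω]
          exact mul_nonneg (Real.rpow_nonneg hx0.le _)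
            (mul_nonneg (hXfnn ω) (hZqnn ω))
      have hEint : num x ≤ x^(-q) * ((∫ ω, Xf ω ∂μ) * M) := by
        have h1 : num x = ∫ ω, Set.indicator E (fun _ => (1:ℝ)) ω ∂μ := by
          rw [integral_indicator_const (1:ℝ) hEm, smul_eq_mul, mul_one]; rfl
        rw [h1]
        calc ∫ ω, Set.indicator E (fun _ => (1:ℝ)) ω ∂μ
            ≤ ∫ ω, x^(-q) * (Xf ω * Zq ω) ∂μ :=
              integral_mono ((integrable_const (1:ℝ)).indicator hEm)
                (hXfZqint.const_mul _) hpt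
          _ = x^(-q) * ∫ ω, Xf ω * Zq ω ∂μ := integral_const_mul _ _
          _ = x^(-q) * ((∫ ω, Xf ω ∂μ) * (∫ ω, Zq ω ∂μ)) := by
              exact congrArg (fun r => x^(-q) * r)
                (hindep2.integral_fun_mul_eq_mul_integral
                  hXfm.aestronglyMeasurable hZqm.aestronglyMeasurable)
          _ = x^(-q) * ((∫ ω, Xf ω ∂μ) * M) := by rw [hZqdef]; rw [hMeq]
      have htrunc : (∫ ω, Xf ω ∂μ) ≤ (2*x₀)^q + K*((c*x)^q * T (c*x)) :=
        trunc_moment μ (fun ω => Real.exp (ε ω)) hYm hY0 q x₀ β hq0 hx₀pos hβ0.le hβq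
          hP (c*x) hcx2
      have hInn : 0 ≤ ∫ ω, Xf ω ∂μ := integral_nonneg hXfnn
      have hxq1 : x^(-q) * x^q = 1 := by
        rw [← Real.rpow_add hx0]
        simp
      have hcxq : (c*x)^q = c^q * x^q := Real.mul_rpow hc.le hx0.le
      have hnum : num x ≤ M*(2*x₀)^q * x^(-q) + (M*K*c^q) * T (c*x) := by
        have h2 : num x ≤ x^(-q) * (((2*x₀)^q + K*((c*x)^q * T (c*x))) * M) := by
          refine le_trans hEint ?_
          refine mul_le_mul_of_nonneg_left ?_ (Real.rpow_nonneg hx0.le _)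
          exact mul_le_mul_of_nonneg_right htrunc hM0
        refine le_trans h2 (le_of_eq ?_)
        rw [hcxq]
        linear_combination (M*K*c^q*T (c*x)) * hxq1
      calc num x / T x ≤ (M*(2*x₀)^q * x^(-q) + (M*K*c^q) * T (c*x)) / T x :=
            (div_le_div_iff_of_pos_right hTx).2 hnum
        _ = g x := by
            rw [hgdef]
            simp only
            rw [add_div, mul_div_assoc, mul_div_assoc]
    -- limits of g
    have hg1 : Tendsto (fun x => M*(2*x₀)^q * (x^(-q)/T x)) atTop (𝓝 0) := by
      have hTx₀ : 0 < T x₀ := hTpos x₀ le_rfl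
      have hup : Tendsto (fun x : ℝ =>
          (M*(2*x₀)^q * ((2:ℝ)^β/(T x₀ * x₀^β))) * x^(β-q)) atTop (𝓝 0) := by
        have h1 : Tendsto (fun x : ℝ => x^(β-q)) atTop (𝓝 0) := by
          have h2 := tendsto_rpow_neg_atTop (show (0:ℝ) < q - β by linarith)
          simpa [neg_sub] using h2
        have h3 := h1.const_mul (M*(2*x₀)^q * ((2:ℝ)^β/(T x₀ * x₀^β)))
        simpa using h3
      apply squeeze_zero' ?_ ?_ hup
      · filter_upwards [eventually_gt_atTop (0:ℝ)] with x hx0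
        exact mul_nonneg (mul_nonneg hM0 (Real.rpow_nonneg (by positivity) q))
          (div_nonneg (Real.rpow_nonneg hx0.le _) (hTnn x))
      · filter_upwards [eventually_ge_atTop x₀, eventually_gt_atTop (0:ℝ)] with x hx1 hx0
        have hTx : 0 < T x := hTpos x hx1
        have hPx := hP x₀ x le_rfl hx1
        have key1 : x^(-q)/T x ≤ (2:ℝ)^β/(T x₀ * x₀^β) * x^(β-q) := by
          have e1 : (2:ℝ)^β/(T x₀ * x₀^β) * x^(β-q) =
              x^(-q) * ((2:ℝ)^β * (x/x₀)^β) / T x₀ := by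
            have e2 : x^(β-q) = x^(-q) * x^β := by
              rw [← Real.rpow_add hx0]
              ring_nf
            rw [e2, Real.div_rpow hx0.le hx₀pos.le]
            field_simp
          rw [e1, div_le_div_iff₀ hTx hTx₀]
          calc x^(-q) * T x₀ ≤ x^(-q) * ((2:ℝ)^β*(x/x₀)^β * T x) :=
                mul_le_mul_of_nonneg_left hPx (Real.rpow_nonneg hx0.le _)
            _ = x^(-q)*((2:ℝ)^β*(x/x₀)^β) * T x := by ring
        calc M*(2*x₀)^q * (x^(-q)/T x)
            ≤ M*(2*x₀)^q * ((2:ℝ)^β/(T x₀ * x₀^β) * x^(β-q)) :=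
              mul_le_mul_of_nonneg_left key1
                (mul_nonneg hM0 (Real.rpow_nonneg (by positivity) q))
          _ = (M*(2*x₀)^q * ((2:ℝ)^β/(T x₀ * x₀^β))) * x^(β-q) := by ring
    have hg : Tendsto g atTop (𝓝 (M*K*c^(q-α))) := by
      have h2 := (hTrat c hc).const_mul (M*K*c^q)
      have h3 := hg1.add h2
      have heq : (0:ℝ) + M*K*c^q * c^(-α) = M*K*c^(q-α) := by
        rw [zero_add, mul_assoc, mul_assoc, ← Real.rpow_add hc, ← sub_eq_add_neg]
        ring
      rwa [heq] at h3
    have hcobdd := isCoboundedUnder_le_of_le atTop (fun x => hratio_nn x)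
    constructor
    · calc Filter.limsup (fun x => num x / T x) atTop
          ≤ Filter.limsup g atTop := limsup_le_limsup hkey hcobdd hg.isBoundedUnder_le
        _ = M*K*c^(q-α) := hg.limsup_eq
    · exact le_limsup_of_frequently_le
        ((Filter.Eventually.of_forall (fun x => hratio_nn x)).frequently)
        (hg.isBoundedUnder_le.mono_le hkey)
  refine ⟨M*K, fun c hc => (hmain c hc).1, ?_⟩
  have hupper : Tendsto (fun c : ℝ => M*K*c^(q-α)) (𝓝[>] 0) (𝓝 0) := by
    have hco : ContinuousAt (fun c : ℝ => c^(q-α)) 0 :=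
      Real.continuousAt_rpow_const 0 (q-α) (Or.inr (by linarith))
    have h1 := hco.tendsto
    rw [Real.zero_rpow (ne_of_gt (by linarith : (0:ℝ) < q - α))] at h1
    have h2 := (h1.mono_left (nhdsWithin_le_nhds : 𝓝[Set.Ioi (0:ℝ)] 0 ≤ 𝓝 0)).const_mul (M*K)
    simpa using h2
  apply tendsto_of_tendsto_of_tendsto_of_le_of_le' tendsto_const_nhds hupper
  · filter_upwards [self_mem_nhdsWithin] with c hc
    exact (hmain c hc).2
  · filter_upwards [self_mem_nhdsWithin] with c hc
    exact (hmain c hc).1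
end
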